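/- arXiv:2506.02517 — 3 statements merged into one kernel-verified Lean document; each statement's English description precedes it below -/
import Mathlib

section
/- (Cartier–Foata normal form) Let G be a finite simple graph and T(G) its trace monoid. For every nonempty element w ∈ T(G) there exist a unique integer h ≥ 1 and a unique sequence of cliques c₁, ..., c_h in T(G) such that w = c₁c₂···c_h and consecutive cliques are in normal position: for every 1 ≤ j < h and every letter v occurring in c_{j+1}, there exists a letter u occurring in c_j with (u,v) not an edge of G. -/
def traceRel {V : Type*} (G : SimpleGraph V) :
    FreeMonoid V → FreeMonoid V → Prop := fun a b =>
  ∃ u v, G.Adj u v ∧ a = FreeMonoid.of u * FreeMonoid.of v ∧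
    b = FreeMonoid.of v * FreeMonoid.of u

def traceCon {V : Type*} (G : SimpleGraph V) : Con (FreeMonoid V) :=
  conGen (traceRel G)

/-- The trace monoid of `G`. -/
abbrev TraceMonoid {V : Type*} (G : SimpleGraph V) := (traceCon G).Quotient

/-- The element of the trace monoid given by the product of the (distinct, pairwise
adjacent) letters of a clique `c`, in increasing order; since the letters of a clique
pairwise commute, this represents the clique as an element of `T(G)`. -/
def cliqueProd {L : ℕ} (G : SimpleGraph (Fin L)) (c : Finset (Fin L)) : TraceMonoid G :=
  ((((c.sort (· ≤ ·)).map FreeMonoid.of).prod : FreeMonoid (Fin L)) :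
    (traceCon G).Quotient)

/-- Cliques `c → c'` are in normal position: every letter of `c'` fails to commute with
some letter of `c`. -/
def NormalPosition {L : ℕ} (G : SimpleGraph (Fin L)) (c c' : Finset (Fin L)) : Prop :=
  ∀ v ∈ c', ∃ u ∈ c, ¬ G.Adj u v

namespace CFaux

open List

variable {L : ℕ} (G : SimpleGraph (Fin L))

/-- `c` blocks the letter `v`. -/
def Blocked (c : Finset (Fin L)) (v : Fin L) : Prop := ∃ u ∈ c, ¬ G.Adj u v

variable {G}

theorem not_blocked_iff {c : Finset (Fin L)} {v : Fin L} :
    ¬ Blocked G c v ↔ ∀ u ∈ c, G.Adj u v := by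
  unfold Blocked; push_neg; tauto

theorem Blocked.mono {c d : Finset (Fin L)} {v : Fin L} (h : c ⊆ d)
    (hb : Blocked G c v) : Blocked G d v := by
  obtain ⟨u, hu, hadj⟩ := hb; exact ⟨u, h hu, hadj⟩

theorem not_mem_of_not_blocked {c : Finset (Fin L)} {v : Fin L}
    (h : ¬ Blocked G c v) : v ∉ c := fun hv =>
  (G.loopless.irrefl v) (not_blocked_iff.1 h v hv)

theorem not_blocked_insert {c : Finset (Fin L)} {u v : Fin L}
    (h : ¬ Blocked G c v) (hadj : G.Adj u v) : ¬ Blocked G (insert u c) v := by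
  rw [not_blocked_iff] at h ⊢
  intro x hx
  rcases Finset.mem_insert.1 hx with rfl | hx
  · exact hadj
  · exact h x hx

variable (G)

open scoped Classical in
/-- Insert a letter into a Cartier–Foata state (list of cliques in *reverse* order). -/
noncomputable def rins : List (Finset (Fin L)) → Fin L → List (Finset (Fin L))
  | [], v => [{v}]
  | [c], v => if Blocked G c v then [{v}, c] else [insert v c]
  | c :: c' :: cs, v =>
    if Blocked G c v then {v} :: c :: c' :: cs
    else if Blocked G c' v then insert v c :: c' :: cs
    else c :: rins (c' :: cs) v

variable {G}

theorem rins_nil (v : Fin L) : rins G [] v = [{v}] := by simp [rins]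

theorem rins_single_blocked {c : Finset (Fin L)} {v : Fin L} (h : Blocked G c v) :
    rins G [c] v = [{v}, c] := by simp [rins, h]

theorem rins_single_not_blocked {c : Finset (Fin L)} {v : Fin L} (h : ¬ Blocked G c v) :
    rins G [c] v = [insert v c] := by simp [rins, h]

theorem rins_cons2_blocked {c c' : Finset (Fin L)} {cs : List (Finset (Fin L))} {v : Fin L}
    (h : Blocked G c v) : rins G (c :: c' :: cs) v = {v} :: c :: c' :: cs := by
  simp [rins, h]

theorem rins_cons2_blocked' {c c' : Finset (Fin L)} {cs : List (Finset (Fin L))} {v : Fin L}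
    (h : ¬ Blocked G c v) (h' : Blocked G c' v) :
    rins G (c :: c' :: cs) v = insert v c :: c' :: cs := by
  simp [rins, h, h']

theorem rins_cons2_rec {c c' : Finset (Fin L)} {cs : List (Finset (Fin L))} {v : Fin L}
    (h : ¬ Blocked G c v) (h' : ¬ Blocked G c' v) :
    rins G (c :: c' :: cs) v = c :: rins G (c' :: cs) v := by
  simp [rins, h, h']

theorem rins_blocked {c : Finset (Fin L)} {cs : List (Finset (Fin L))} {v : Fin L}
    (h : Blocked G c v) : rins G (c :: cs) v = {v} :: c :: cs := by
  cases cs with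
  | nil => exact rins_single_blocked h
  | cons c' cs => exact rins_cons2_blocked h

theorem rins_ne_nil (s : List (Finset (Fin L))) (v : Fin L) : rins G s v ≠ [] := by
  match s with
  | [] => simp [rins_nil]
  | [c] =>
    by_cases h : Blocked G c v
    · simp [rins_single_blocked h]
    · simp [rins_single_not_blocked h]
  | c :: c' :: cs =>
    by_cases h : Blocked G c v
    · simp [rins_cons2_blocked h]
    · by_cases h' : Blocked G c' v
      · simp [rins_cons2_blocked' h h']
      · simp [rins_cons2_rec h h']

/-- Head structure of `rins` when the top clique does not block `v`. -/
theorem rins_head_not_blocked {c : Finset (Fin L)} {cs : List (Finset (Fin L))} {v : Fin L}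
    (h : ¬ Blocked G c v) :
    ∃ t, rins G (c :: cs) v = c :: t ∨ rins G (c :: cs) v = insert v c :: t := by
  cases cs with
  | nil => exact ⟨[], Or.inr (rins_single_not_blocked h)⟩
  | cons c' cs =>
    by_cases h' : Blocked G c' v
    · exact ⟨c' :: cs, Or.inr (rins_cons2_blocked' h h')⟩
    · exact ⟨rins G (c' :: cs) v, Or.inl (rins_cons2_rec h h')⟩

end CFaux

namespace CFaux

open List

variable {L : ℕ} {G : SimpleGraph (Fin L)}

theorem not_blocked_singleton {u v : Fin L} (h : G.Adj u v) : ¬ Blocked G {u} v := by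
  rw [not_blocked_iff]
  intro x hx
  rw [Finset.mem_singleton] at hx
  subst hx
  exact h

private theorem comm_mixed {u v : Fin L} (h : G.Adj u v) {c : Finset (Fin L)}
    {cs : List (Finset (Fin L))} (hcu : Blocked G c u) (hcv : ¬ Blocked G c v) :
    rins G (rins G (c :: cs) u) v = rins G (rins G (c :: cs) v) u := by
  rw [rins_blocked hcu, rins_cons2_rec (not_blocked_singleton h) hcv]
  obtain ⟨t, hd | hd⟩ := rins_head_not_blocked (cs := cs) hcv <;> rw [hd]
  · rw [rins_blocked hcu]
  · rw [rins_blocked (hcu.mono (Finset.subset_insert _ _))]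

private theorem comm_rec_mixed {u v : Fin L} (h : G.Adj u v) {c c' : Finset (Fin L)}
    {cs : List (Finset (Fin L))} (hcu : ¬ Blocked G c u) (hcv : ¬ Blocked G c v)
    (hu' : Blocked G c' u) (hv' : ¬ Blocked G c' v) :
    rins G (rins G (c :: c' :: cs) u) v = rins G (rins G (c :: c' :: cs) v) u := by
  rw [rins_cons2_blocked' hcu hu', rins_cons2_rec (not_blocked_insert hcv h) hv',
    rins_cons2_rec hcv hv']
  obtain ⟨t, hd | hd⟩ := rins_head_not_blocked (cs := cs) hv' <;> rw [hd]
  · rw [rins_cons2_blocked' hcu hu']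
  · rw [rins_cons2_blocked' hcu (hu'.mono (Finset.subset_insert _ _))]

theorem rins_comm {u v : Fin L} (h : G.Adj u v) :
    ∀ s : List (Finset (Fin L)), rins G (rins G s u) v = rins G (rins G s v) u
  | [] => by
    rw [rins_nil, rins_nil, rins_single_not_blocked (not_blocked_singleton h),
      rins_single_not_blocked (not_blocked_singleton h.symm)]
    rw [show (insert v {u} : Finset (Fin L)) = insert u {v} from Finset.pair_comm v u ▸ rfl]
  | [c] => by
    by_cases hcu : Blocked G c u <;> by_cases hcv : Blocked G c v
    · rw [rins_single_blocked hcu, rins_single_blocked hcv,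
        rins_cons2_blocked' (not_blocked_singleton h) hcv,
        rins_cons2_blocked' (not_blocked_singleton h.symm) hcu]
      rw [show (insert v {u} : Finset (Fin L)) = insert u {v} from Finset.pair_comm v u ▸ rfl]
    · exact comm_mixed h hcu hcv
    · exact (comm_mixed h.symm hcv hcu).symm
    · rw [rins_single_not_blocked hcu, rins_single_not_blocked hcv,
        rins_single_not_blocked (not_blocked_insert hcv h),
        rins_single_not_blocked (not_blocked_insert hcu h.symm),
        Finset.insert_comm]
  | c :: c' :: cs => by
    by_cases hcu : Blocked G c u <;> by_cases hcv : Blocked G c v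
    · rw [rins_blocked hcu, rins_blocked hcv,
        rins_cons2_blocked' (not_blocked_singleton h) hcv,
        rins_cons2_blocked' (not_blocked_singleton h.symm) hcu]
      rw [show (insert v {u} : Finset (Fin L)) = insert u {v} from Finset.pair_comm v u ▸ rfl]
    · exact comm_mixed h hcu hcv
    · exact (comm_mixed h.symm hcv hcu).symm
    · by_cases hu' : Blocked G c' u <;> by_cases hv' : Blocked G c' v
      · rw [rins_cons2_blocked' hcu hu', rins_cons2_blocked' hcv hv',
          rins_cons2_blocked' (not_blocked_insert hcv h) hv',
          rins_cons2_blocked' (not_blocked_insert hcu h.symm) hu',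
          Finset.insert_comm]
      · exact comm_rec_mixed h hcu hcv hu' hv'
      · exact (comm_rec_mixed h.symm hcv hcu hv' hu').symm
      · rw [rins_cons2_rec hcu hu', rins_cons2_rec hcv hv']
        have ih := rins_comm h (c' :: cs)
        obtain ⟨t, hd | hd⟩ := rins_head_not_blocked (cs := cs) hu' <;>
          obtain ⟨t', hd' | hd'⟩ := rins_head_not_blocked (cs := cs) hv' <;>
            rw [hd, hd'] <;>
        · rw [rins_cons2_rec hcv (by first | exact hv' | exact not_blocked_insert hv' h),
            rins_cons2_rec hcu (by first | exact hu' | exact not_blocked_insert hu' h.symm),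
            ← hd, ← hd', ih]

end CFaux

namespace CFaux

open List

variable {L : ℕ}

variable (G : SimpleGraph (Fin L))

/-- The class of a word in the trace monoid. -/
def mkq (l : List (Fin L)) : TraceMonoid G := (FreeMonoid.ofList l : (traceCon G).Quotient)

variable {G}

theorem mkq_append (l l' : List (Fin L)) : mkq G (l ++ l') = mkq G l * mkq G l' := by
  rw [mkq, mkq, mkq, FreeMonoid.ofList_append, Con.coe_mul]

theorem mkq_nil : mkq G ([] : List (Fin L)) = 1 := rfl

theorem prod_map_of (l : List (Fin L)) :
    ((l.map FreeMonoid.of).prod : FreeMonoid (Fin L)) = FreeMonoid.ofList l := by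
  induction l with
  | nil => rfl
  | cons x xs ih =>
    rw [map_cons, prod_cons, ih, show x :: xs = [x] ++ xs from rfl, FreeMonoid.ofList_append,
      FreeMonoid.ofList_singleton]

theorem cliqueProd_eq (c : Finset (Fin L)) :
    cliqueProd G c = mkq G (c.sort (· ≤ ·)) := by
  rw [cliqueProd, mkq, prod_map_of]

theorem mkq_perm {l l' : List (Fin L)} (p : l.Perm l') (hp : l.Pairwise G.Adj) :
    mkq G l = mkq G l' := by
  induction p with
  | nil => rfl
  | @cons x l₁ l₂ p ih =>
    rw [show (x :: l₁ : List (Fin L)) = [x] ++ l₁ from rfl,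
      show (x :: l₂ : List (Fin L)) = [x] ++ l₂ from rfl,
      mkq_append, mkq_append, ih hp.of_cons]
  | swap x y l =>
    have hadj : G.Adj y x := rel_of_pairwise_cons hp mem_cons_self
    rw [show y :: x :: l = [y, x] ++ l from rfl, show x :: y :: l = [x, y] ++ l from rfl,
      mkq_append, mkq_append]
    congr 1
    rw [mkq, mkq]
    rw [Con.eq]
    have : FreeMonoid.ofList [y, x] = FreeMonoid.of y * FreeMonoid.of x := rfl
    rw [this, show FreeMonoid.ofList [x, y] = FreeMonoid.of x * FreeMonoid.of y from rfl]
    exact ConGen.Rel.of _ _ ⟨y, x, hadj, rfl, rfl⟩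
  | trans p₁ p₂ ih₁ ih₂ =>
    exact (ih₁ hp).trans (ih₂ ((p₁.pairwise_iff (fun hab => hab.symm)).1 hp))

theorem pairwise_adj_of_clique {c : Finset (Fin L)} (hc : G.IsClique ↑c)
    {l : List (Fin L)} (hn : l.Nodup) (hm : ∀ x ∈ l, x ∈ c) : l.Pairwise G.Adj :=
  hn.imp_of_mem fun ha hb hne => hc (Finset.mem_coe.2 (hm _ ha)) (Finset.mem_coe.2 (hm _ hb)) hne

theorem sort_pairwise_adj {c : Finset (Fin L)} (hc : G.IsClique ↑c) :
    (c.sort (· ≤ ·)).Pairwise G.Adj :=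
  pairwise_adj_of_clique hc (Finset.sort_nodup _ _) fun _ hx => (Finset.mem_sort _).1 hx

theorem cliqueProd_singleton (v : Fin L) : cliqueProd G {v} = mkq G [v] := by
  rw [cliqueProd_eq, Finset.sort_singleton]

theorem cliqueProd_insert {c : Finset (Fin L)} {v : Fin L} (hc : G.IsClique ↑c)
    (hv : v ∉ c) (hadj : ∀ u ∈ c, G.Adj u v) :
    cliqueProd G (insert v c) = cliqueProd G c * mkq G [v] := by
  have hcl' : G.IsClique ↑(insert v c) := by
    rw [Finset.coe_insert]
    exact hc.insert fun b hb _ => (hadj b (Finset.mem_coe.1 hb)).symm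
  have hperm : ((insert v c).sort (· ≤ ·)).Perm (c.sort (· ≤ ·) ++ [v]) := by
    refine ((Finset.sort_perm_toList _ _).trans ((Finset.toList_insert hv).trans ?_)).trans
      (perm_append_singleton v _).symm
    exact Perm.cons v (Finset.sort_perm_toList _ _).symm
  rw [cliqueProd_eq, cliqueProd_eq, ← mkq_append]
  exact mkq_perm hperm (sort_pairwise_adj hcl')

theorem mkq_single_comm {c : Finset (Fin L)} {v : Fin L} (hc : G.IsClique ↑c)
    (hadj : ∀ u ∈ c, G.Adj u v) :
    mkq G [v] * cliqueProd G c = cliqueProd G c * mkq G [v] := by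
  have hv : v ∉ c := fun hv => G.loopless.irrefl v (hadj v hv)
  have hpw : (v :: c.sort (· ≤ ·)).Pairwise G.Adj := by
    rw [pairwise_cons]
    exact ⟨fun u hu => (hadj u ((Finset.mem_sort _).1 hu)).symm, sort_pairwise_adj hc⟩
  calc mkq G [v] * cliqueProd G c = mkq G (v :: c.sort (· ≤ ·)) := by
        rw [cliqueProd_eq, ← mkq_append]; rfl
    _ = mkq G (c.sort (· ≤ ·) ++ [v]) := mkq_perm (perm_append_singleton v _).symm hpw
    _ = cliqueProd G c * mkq G [v] := by rw [mkq_append, cliqueProd_eq]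

end CFaux

namespace CFaux

open List

variable {L : ℕ} {G : SimpleGraph (Fin L)}

variable (G) in
/-- Product of the cliques of a reversed state. -/
def prodQ (rs : List (Finset (Fin L))) : TraceMonoid G :=
  ((rs.reverse).map (cliqueProd G)).prod

theorem prodQ_nil : prodQ G ([] : List (Finset (Fin L))) = 1 := rfl

theorem prodQ_cons (c : Finset (Fin L)) (rs : List (Finset (Fin L))) :
    prodQ G (c :: rs) = prodQ G rs * cliqueProd G c := by
  rw [prodQ, prodQ, reverse_cons, map_append, prod_append, map_singleton, prod_singleton]

variable (G) in
/-- Invariant of Cartier–Foata states (in reverse order). -/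
def Good (rs : List (Finset (Fin L))) : Prop :=
  (∀ c ∈ rs, c.Nonempty ∧ G.IsClique (c : Set (Fin L))) ∧
    List.Chain' (flip (NormalPosition G)) rs

theorem good_nil : Good G ([] : List (Finset (Fin L))) := by
  constructor
  · intro c hc; simp at hc
  · exact List.isChain_nil

theorem np_singleton_of_blocked {c : Finset (Fin L)} {v : Fin L} (h : Blocked G c v) :
    NormalPosition G c {v} := by
  intro w hw
  rw [Finset.mem_singleton] at hw
  subst hw
  exact h

theorem np_mono {c d c' : Finset (Fin L)} (h : NormalPosition G c c') (hcd : c ⊆ d) :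
    NormalPosition G d c' := fun v hv => (h v hv).imp fun u hu => ⟨hcd hu.1, hu.2⟩

theorem np_insert {c' c : Finset (Fin L)} {v : Fin L} (h : NormalPosition G c' c)
    (hb : Blocked G c' v) : NormalPosition G c' (insert v c) := by
  intro w hw
  rcases Finset.mem_insert.1 hw with rfl | hw
  · exact hb
  · exact h w hw

theorem clique_insert_of_not_blocked {c : Finset (Fin L)} {v : Fin L}
    (hc : G.IsClique ↑c) (h : ¬ Blocked G c v) : G.IsClique ↑(insert v c) := by
  rw [Finset.coe_insert]
  exact hc.insert fun b hb _ => (not_blocked_iff.1 h b (Finset.mem_coe.1 hb)).symm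

theorem rins_good {rs : List (Finset (Fin L))} (h : Good G rs) (v : Fin L) :
    Good G (rins G rs v) := by
  obtain ⟨hmem, hch⟩ := h
  match rs with
  | [] =>
    rw [rins_nil]
    refine ⟨?_, List.isChain_singleton _⟩
    intro d hd
    rw [mem_singleton] at hd
    subst hd
    exact ⟨Finset.singleton_nonempty v, by simpa using G.isClique_singleton v⟩
  | [c] =>
    by_cases hb : Blocked G c v
    · rw [rins_single_blocked hb]
      refine ⟨?_, ?_⟩
      · intro d hd
        simp only [mem_cons, mem_singleton, not_mem_nil, or_false] at hd
        rcases hd with hd | hd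
        · subst hd
          exact ⟨Finset.singleton_nonempty v, by simpa using G.isClique_singleton v⟩
        · subst hd; exact hmem _ (by simp)
      · exact List.isChain_cons_cons.2 ⟨np_singleton_of_blocked hb, by simp⟩
    · rw [rins_single_not_blocked hb]
      refine ⟨?_, List.isChain_singleton _⟩
      intro d hd
      rw [mem_singleton] at hd
      subst hd
      exact ⟨Finset.insert_nonempty _ _,
        clique_insert_of_not_blocked (hmem c (by simp)).2 hb⟩
  | c :: c' :: cs =>
    have hcc' : NormalPosition G c' c := List.isChain_cons_cons.1 hch |>.1
    by_cases hb : Blocked G c v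
    · rw [rins_cons2_blocked hb]
      refine ⟨?_, List.isChain_cons_cons.2 ⟨np_singleton_of_blocked hb, hch⟩⟩
      intro d hd
      rcases mem_cons.1 hd with hd | hd
      · subst hd
        exact ⟨Finset.singleton_nonempty v, by simpa using G.isClique_singleton v⟩
      · exact hmem d hd
    · by_cases hb' : Blocked G c' v
      · rw [rins_cons2_blocked' hb hb']
        refine ⟨?_, ?_⟩
        · intro d hd
          rcases mem_cons.1 hd with hd | hd
          · subst hd
            exact ⟨Finset.insert_nonempty _ _,
              clique_insert_of_not_blocked (hmem c (by simp)).2 hb⟩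
          · exact hmem d (mem_cons_of_mem c hd)
        · exact List.isChain_cons_cons.2 ⟨np_insert hcc' hb', (List.isChain_cons_cons.1 hch).2⟩
      · rw [rins_cons2_rec hb hb']
        have hgood' : Good G (rins G (c' :: cs) v) :=
          rins_good ⟨fun d hd => hmem d (mem_cons_of_mem c hd), (List.isChain_cons_cons.1 hch).2⟩ v
        refine ⟨?_, ?_⟩
        · intro d hd
          rcases mem_cons.1 hd with hd | hd
          · subst hd; exact hmem d (by simp)
          · exact hgood'.1 d hd
        · apply List.isChain_cons.2
          refine ⟨?_, hgood'.2⟩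
          intro y hy
          obtain ⟨t, hd | hd⟩ := rins_head_not_blocked (cs := cs) hb' <;>
            rw [hd] at hy <;> rw [head?_cons, Option.mem_some_iff] at hy <;> subst hy
          · exact hcc'
          · exact np_mono hcc' (Finset.subset_insert _ _)

theorem rins_prodQ {rs : List (Finset (Fin L))}
    (h : ∀ c ∈ rs, G.IsClique (c : Set (Fin L))) (v : Fin L) :
    prodQ G (rins G rs v) = prodQ G rs * mkq G [v] := by
  match rs with
  | [] => rw [rins_nil, prodQ_cons, prodQ_nil, cliqueProd_singleton]
  | [c] =>
    by_cases hb : Blocked G c v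
    · rw [rins_single_blocked hb, prodQ_cons, prodQ_cons, cliqueProd_singleton]
    · rw [rins_single_not_blocked hb, prodQ_cons, prodQ_cons,
        cliqueProd_insert (h c (by simp)) (not_mem_of_not_blocked hb)
          (not_blocked_iff.1 hb), mul_assoc]
  | c :: c' :: cs =>
    by_cases hb : Blocked G c v
    · rw [rins_cons2_blocked hb, prodQ_cons, cliqueProd_singleton]
    · by_cases hb' : Blocked G c' v
      · rw [rins_cons2_blocked' hb hb']
        simp only [prodQ_cons]
        rw [cliqueProd_insert (h c (by simp)) (not_mem_of_not_blocked hb)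
            (not_blocked_iff.1 hb), ← mul_assoc]
      · rw [rins_cons2_rec hb hb', prodQ_cons, prodQ_cons,
          rins_prodQ (fun d hd => h d (mem_cons_of_mem c hd)) v, mul_assoc,
          mkq_single_comm (h c (by simp)) (not_blocked_iff.1 hb), ← mul_assoc]

theorem foldl_rins_good {a : List (Fin L)} :
    ∀ {rs : List (Finset (Fin L))}, Good G rs → Good G (List.foldl (rins G) rs a) := by
  induction a with
  | nil => intro rs h; exact h
  | cons x a ih => intro rs h; exact ih (rins_good h x)

theorem foldl_rins_prodQ {a : List (Fin L)} :
    ∀ {rs : List (Finset (Fin L))}, Good G rs →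
      prodQ G (List.foldl (rins G) rs a) = prodQ G rs * mkq G a := by
  induction a with
  | nil => intro rs _; rw [foldl_nil, mkq_nil, mul_one]
  | cons x a ih =>
    intro rs h
    rw [foldl_cons, ih (rins_good h x), rins_prodQ (fun d hd => (h.1 d hd).2),
      show (x :: a : List (Fin L)) = [x] ++ a from rfl, mkq_append, mul_assoc]

theorem foldl_rins_ne_nil {a : List (Fin L)} (ha : a ≠ []) (rs : List (Finset (Fin L))) :
    List.foldl (rins G) rs a ≠ [] := by
  match a with
  | [x] => exact rins_ne_nil rs x
  | x :: y :: a => exact foldl_rins_ne_nil (by simp) (rins G rs x)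

end CFaux

namespace CFaux

open List

variable {L : ℕ} {G : SimpleGraph (Fin L)}

variable (G) in
/-- The congruence of having equal Cartier–Foata folds from every starting state. -/
def foldCon : Con (FreeMonoid (Fin L)) where
  r a b := ∀ s, List.foldl (rins G) s a.toList = List.foldl (rins G) s b.toList
  iseqv := ⟨fun _ _ => rfl, fun h s => (h s).symm, fun h1 h2 s => (h1 s).trans (h2 s)⟩
  mul' := by
    intro w x y z h1 h2 s
    rw [FreeMonoid.toList_mul, FreeMonoid.toList_mul, List.foldl_append, List.foldl_append,
      h1, h2]

theorem traceCon_le_foldCon : traceCon G ≤ foldCon G := by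
  refine Con.conGen_le.2 fun a b hab => ?_
  obtain ⟨u, v, huv, ha, hb⟩ := hab
  subst ha; subst hb
  intro s
  have h1 : (FreeMonoid.of u * FreeMonoid.of v).toList = [u, v] := by
    rw [FreeMonoid.toList_mul, FreeMonoid.toList_of, FreeMonoid.toList_of]; rfl
  have h2 : (FreeMonoid.of v * FreeMonoid.of u).toList = [v, u] := by
    rw [FreeMonoid.toList_mul, FreeMonoid.toList_of, FreeMonoid.toList_of]; rfl
  rw [h1, h2, foldl_cons, foldl_cons, foldl_cons, foldl_cons, foldl_nil, foldl_nil]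
  exact rins_comm huv s

theorem mkq_flatten_sort (cs : List (Finset (Fin L))) :
    mkq G ((cs.map (fun c => c.sort (· ≤ ·))).flatten) = (cs.map (cliqueProd G)).prod := by
  induction cs with
  | nil => rfl
  | cons c cs ih =>
    rw [map_cons, flatten_cons, mkq_append, ih, map_cons, prod_cons, cliqueProd_eq]

theorem foldl_rins_clique_aux :
    ∀ (l : List (Fin L)) (S : Finset (Fin L)) (rs : List (Finset (Fin L))),
      l.Pairwise G.Adj → (∀ u ∈ S, ∀ x ∈ l, G.Adj u x) →
      (∀ r ∈ rs.head?, ∀ x ∈ l, Blocked G r x) →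
      List.foldl (rins G) (S :: rs) l = (S ∪ l.toFinset) :: rs
  | [], S, rs, _, _, _ => by simp
  | v :: l, S, rs, hpw, hS, hrs => by
    have hnb : ¬ Blocked G S v :=
      not_blocked_iff.2 fun u hu => hS u hu v mem_cons_self
    have step : rins G (S :: rs) v = insert v S :: rs := by
      cases rs with
      | nil => exact rins_single_not_blocked hnb
      | cons r rs' => exact rins_cons2_blocked' hnb (hrs r rfl v mem_cons_self)
    rw [foldl_cons, step,
      foldl_rins_clique_aux l (insert v S) rs hpw.of_cons
        (fun u hu x hx => by
          rcases Finset.mem_insert.1 hu with rfl | hu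
          · exact rel_of_pairwise_cons hpw hx
          · exact hS u hu x (mem_cons_of_mem _ hx))
        (fun r hr x hx => hrs r hr x (mem_cons_of_mem _ hx)),
      toFinset_cons, Finset.insert_union, Finset.union_insert]

theorem foldl_rins_sort {c : Finset (Fin L)} (hne : c.Nonempty) (hcl : G.IsClique ↑c)
    (rs : List (Finset (Fin L))) (hrs : ∀ r ∈ rs.head?, NormalPosition G r c) :
    List.foldl (rins G) rs (c.sort (· ≤ ·)) = c :: rs := by
  cases hsort : c.sort (· ≤ ·) with
  | nil =>
    exfalso
    have h := Finset.sort_toFinset (s := c) (r := (· ≤ ·))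
    rw [hsort] at h
    simp only [toFinset_nil] at h
    exact hne.ne_empty h.symm
  | cons v l =>
    have hmemc : ∀ x ∈ v :: l, x ∈ c := fun x hx =>
      (Finset.mem_sort _).1 (by rw [hsort]; exact hx)
    have hpw : (v :: l).Pairwise G.Adj := by
      have := sort_pairwise_adj hcl (c := c); rwa [hsort] at this
    have step : rins G rs v = {v} :: rs := by
      cases rs with
      | nil => exact rins_nil v
      | cons r rs' => exact rins_blocked (hrs r rfl v (hmemc v mem_cons_self))
    rw [foldl_cons, step,
      foldl_rins_clique_aux l {v} rs hpw.of_cons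
        (fun u hu x hx => by
          rw [Finset.mem_singleton] at hu; subst hu
          exact rel_of_pairwise_cons hpw hx)
        (fun r hr x hx => hrs r hr x (hmemc x (mem_cons_of_mem _ hx)))]
    congr 1
    rw [show ({v} : Finset (Fin L)) ∪ l.toFinset = insert v l.toFinset from
      Finset.insert_union v ∅ l.toFinset ▸ by simp, ← toFinset_cons, ← hsort,
      Finset.sort_toFinset]

theorem foldl_rins_flatten :
    ∀ (cs : List (Finset (Fin L))) (rs : List (Finset (Fin L))),
      (∀ c ∈ cs, c.Nonempty ∧ G.IsClique (c : Set (Fin L))) →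
      List.Chain' (NormalPosition G) cs →
      (∀ r ∈ rs.head?, ∀ c0 ∈ cs.head?, NormalPosition G r c0) →
      List.foldl (rins G) rs ((cs.map (fun c => c.sort (· ≤ ·))).flatten) = cs.reverse ++ rs
  | [], rs, _, _, _ => by simp
  | c :: cs, rs, hmem, hch, hrs => by
    rw [map_cons, flatten_cons, foldl_append,
      foldl_rins_sort (hmem c (by simp)).1 (hmem c (by simp)).2 rs
        (fun r hr => hrs r hr c rfl),
      foldl_rins_flatten cs (c :: rs) (fun d hd => hmem d (mem_cons_of_mem _ hd))
        (List.isChain_cons.1 hch).2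
        (fun r hr c0 hc0 => by
          rw [head?_cons, Option.mem_some_iff] at hr
          subst hr
          exact (List.isChain_cons.1 hch).1 c0 hc0)]
    rw [reverse_cons, append_assoc, singleton_append]

end CFaux

/-- Cartier–Foata normal form: every nonempty element of the trace monoid factors
uniquely as a product of nonempty cliques with consecutive cliques in normal position. -/
theorem cartier_foata_normal_form {L : ℕ} (G : SimpleGraph (Fin L))
    (w : TraceMonoid G) (hw : w ≠ 1) :
    ∃! cs : List (Finset (Fin L)),
      cs ≠ [] ∧
      (∀ c ∈ cs, c.Nonempty ∧ G.IsClique (c : Set (Fin L))) ∧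
      List.Chain' (NormalPosition G) cs ∧
      (cs.map (cliqueProd G)).prod = w := by
  open CFaux List in
  induction w using Con.induction_on with
  | _ a =>
  have hane : FreeMonoid.toList a ≠ [] := by
    intro h0
    apply hw
    have : a = 1 := by
      rw [← FreeMonoid.ofList_toList a, h0]; rfl
    rw [this, Con.coe_one]
  have hgood : Good G (List.foldl (rins G) [] a.toList) :=
    foldl_rins_good good_nil
  refine ⟨(List.foldl (rins G) [] a.toList).reverse, ⟨?_, ?_, ?_, ?_⟩, ?_⟩
  · simpa using foldl_rins_ne_nil hane []
  · intro c hc; exact hgood.1 c (mem_reverse.1 hc)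
  · exact List.isChain_reverse.2 hgood.2
  · have h1 : prodQ G (List.foldl (rins G) [] a.toList) = mkq G a.toList := by
      rw [foldl_rins_prodQ good_nil, prodQ_nil, one_mul]
    show prodQ G (List.foldl (rins G) [] a.toList) = _
    rw [h1, mkq, FreeMonoid.ofList_toList]
  · rintro cs' ⟨h1, h2, h3, h4⟩
    have hw' : mkq G ((cs'.map (fun c => c.sort (· ≤ ·))).flatten) = ↑a := by
      rw [mkq_flatten_sort, h4]
    have hcon : traceCon G (FreeMonoid.ofList ((cs'.map (fun c => c.sort (· ≤ ·))).flatten)) a :=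
      (Con.eq _).1 hw'
    have hfold := traceCon_le_foldCon hcon []
    rw [FreeMonoid.toList_ofList] at hfold
    have hflat := foldl_rins_flatten cs' [] h2 h3 (by simp)
    rw [append_nil] at hflat
    have hrev : cs'.reverse = List.foldl (rins G) [] a.toList := by
      rw [← hflat, hfold]
    rw [← hrev, reverse_reverse]
end

section
/- Let G be a simple graph on [L], let ε be a Dyck path of length 2p with up-step index set ε↑ and down-step index set ε↓, and fix a labelling i : ε↑ → [L]. Then the number of closed paths e = w₀, w₁, ..., w_{2p} = e in the Cayley graph of the trace monoid T(G) whose step profile is ε and such that w_k = i(k)·w_{k-1} for every k ∈ ε↑ is at most p! (p factorial). -/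
def tmOf {V : Type*} (G : SimpleGraph V) (v : V) : TraceMonoid G :=
  ((FreeMonoid.of v : FreeMonoid V) : (traceCon G).Quotient)

theorem traceCon_length {V : Type*} {G : SimpleGraph V} :
    ∀ a b, (traceCon G) a b → a.length = b.length := by
  intro a b h
  induction h with
  | of a b h =>
      obtain ⟨u, v, _, ha, hb⟩ := h
      subst ha; subst hb; simp
  | refl => rfl
  | symm _ ih => omega
  | trans _ _ ih1 ih2 => omega
  | mul _ _ ih1 ih2 => simpa [FreeMonoid.length_mul] using by omega

/-- The (well-defined) length of an element of the trace monoid. -/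
def tlen {V : Type*} {G : SimpleGraph V} (w : TraceMonoid G) : ℕ :=
  Con.liftOn w FreeMonoid.length (fun a b h => traceCon_length a b h)

/-- Adjacency in the Cayley graph of the trace monoid. -/
def CayleyAdj {V : Type*} (G : SimpleGraph V) (w₁ w₂ : TraceMonoid G) : Prop :=
  ∃ v : V, w₁ = tmOf G v * w₂ ∨ w₂ = tmOf G v * w₁

/-- Closed paths of length `2p` at the empty word whose step profile is the Dyck path
`ε` and whose up step at time `k ∈ ε↑` adds the prescribed letter `i k`. -/
def LabeledPaths {L : ℕ} (G : SimpleGraph (Fin L)) (p : ℕ) (ε : ℕ → ℤ)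
    (i : Fin (2 * p) → Fin L) : Type _ :=
  {w : Fin (2 * p + 1) → TraceMonoid G //
    w 0 = 1 ∧ w (Fin.last (2 * p)) = 1 ∧
    (∀ k : Fin (2 * p), CayleyAdj G (w k.castSucc) (w k.succ)) ∧
    (∀ k : Fin (2 * p), (ε k = 1 ↔ tlen (w k.castSucc) < tlen (w k.succ))) ∧
    (∀ k : Fin (2 * p), ε k = 1 → w k.succ = tmOf G (i k) * w k.castSucc)}

/-- `ε` is a Dyck path of length `2p`. -/
def IsDyckPath (p : ℕ) (ε : ℕ → ℤ) : Prop :=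
  (∀ k < 2 * p, ε k = 1 ∨ ε k = -1) ∧
  (∀ m : ℕ, m ≤ 2 * p → 0 ≤ ∑ k ∈ Finset.range m, ε k) ∧
  ∑ k ∈ Finset.range (2 * p), ε k = 0

section Words
variable {V : Type*} [DecidableEq V] {G : SimpleGraph V}

/-- Projection of a word onto the pair of letters `{c, d}`. -/
def proj (c d : V) (l : List V) : List V := l.filter (fun x => x = c ∨ x = d)

theorem proj_append (c d : V) (l m : List V) :
    proj c d (l ++ m) = proj c d l ++ proj c d m :=
  List.filter_append ..

theorem proj_eq_of_con {a b : FreeMonoid V} (h : traceCon G a b) (c d : V)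
    (hcd : c = d ∨ ¬ G.Adj c d) : proj c d a.toList = proj c d b.toList := by
  induction h with
  | of a b hab =>
      obtain ⟨u, v, huv, ha, hb⟩ := hab
      subst ha; subst hb
      have h1 : ¬((u = c ∨ u = d) ∧ (v = c ∨ v = d)) := by
        rintro ⟨hu | hu, hv | hv⟩ <;> subst hu <;> subst hv
        · exact huv.ne rfl
        · rcases hcd with h | h
          · exact huv.ne h
          · exact h huv
        · rcases hcd with h | h
          · exact huv.ne h.symm
          · exact h huv.symm
        · exact huv.ne rfl
      show proj c d [u, v] = proj c d [v, u]
      by_cases hu : u = c ∨ u = d <;> by_cases hv : v = c ∨ v = d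
      · exact absurd ⟨hu, hv⟩ h1
      all_goals simp [proj, List.filter_cons, hu, hv]
  | refl => rfl
  | symm _ ih => exact ih.symm
  | trans _ _ ih1 ih2 => exact ih1.trans ih2
  | mul _ _ ih1 ih2 => simp only [FreeMonoid.toList_mul, proj_append, ih1, ih2]

theorem con_cons_swap {u x : V} (h : G.Adj u x) (t : FreeMonoid V) :
    traceCon G (FreeMonoid.of x * (FreeMonoid.of u * t))
      (FreeMonoid.of u * (FreeMonoid.of x * t)) := by
  have h0 : traceRel G (FreeMonoid.of x * FreeMonoid.of u)
      (FreeMonoid.of u * FreeMonoid.of x) := ⟨x, u, h.symm, rfl, rfl⟩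
  have h1 := (traceCon G).mul (ConGen.Rel.of _ _ h0) ((traceCon G).refl t)
  simpa [mul_assoc] using h1

theorem con_front {u : V} : ∀ (p s : List V), (∀ x ∈ p, G.Adj u x) →
    traceCon G (FreeMonoid.ofList (p ++ u :: s))
      (FreeMonoid.of u * FreeMonoid.ofList (p ++ s))
  | [], s, _ => by
      simp only [List.nil_append, FreeMonoid.ofList_cons]
      exact (traceCon G).refl _
  | x :: p, s, h => by
      have ih := con_front p s (fun y hy => h y (List.mem_cons_of_mem _ hy))
      have h1 : traceCon G (FreeMonoid.ofList (x :: p ++ u :: s))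
          (FreeMonoid.of x * (FreeMonoid.of u * FreeMonoid.ofList (p ++ s))) := by
        rw [List.cons_append, FreeMonoid.ofList_cons]
        exact (traceCon G).mul ((traceCon G).refl _) ih
      exact (traceCon G).trans h1 (con_cons_swap (h x List.mem_cons_self) _)

theorem split_first {u : V} {b : List V} (hu : u ∈ b) :
    ∃ p s, b = p ++ u :: s ∧ u ∉ p := by
  induction b with
  | nil => cases hu
  | cons y t ih =>
      by_cases hy : y = u
      · exact ⟨[], t, by simp [hy], List.not_mem_nil⟩
      · have hut : u ∈ t := by
          rcases List.mem_cons.1 hu with h | h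
          · exact absurd h.symm hy
          · exact h
        rcases ih hut with ⟨p, s, rfl, hp⟩
        refine ⟨y :: p, s, rfl, ?_⟩
        intro hmem
        rcases List.mem_cons.1 hmem with h | h
        · exact hy h.symm
        · exact hp h

theorem con_of_proj : ∀ (n : ℕ) (a b : List V), a.length ≤ n →
    (∀ c d : V, (c = d ∨ ¬ G.Adj c d) → proj c d a = proj c d b) →
    traceCon G (FreeMonoid.ofList a) (FreeMonoid.ofList b) := by
  intro n
  induction n with
  | zero =>
      intro a b ha h
      have ha' : a = [] := List.length_eq_zero_iff.1 (Nat.le_zero.1 ha)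
      subst ha'
      have hb : b = [] := by
        cases b with
        | nil => rfl
        | cons y t =>
            have := h y y (Or.inl rfl)
            simp [proj, List.filter_cons] at this
      subst hb; exact (traceCon G).refl _
  | succ n ih =>
      intro a b ha h
      cases a with
      | nil =>
          have hb : b = [] := by
            cases b with
            | nil => rfl
            | cons y t =>
                have := h y y (Or.inl rfl)
                simp [proj, List.filter_cons] at this
          subst hb; exact (traceCon G).refl _
      | cons u a' =>
          -- u occurs in b
          have hub : u ∈ b := by
            have := h u u (Or.inl rfl)
            have hmem : u ∈ proj u u (u :: a') := by
              simp [proj, List.filter_cons]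
            rw [this] at hmem
            exact (List.mem_filter.1 hmem).1
          obtain ⟨p, s, rfl, hup⟩ := split_first hub
          -- every letter of p is adjacent to u
          have hadj : ∀ x ∈ p, G.Adj u x := by
            intro x hxp
            by_contra hna
            have hxu : x ≠ u := fun hh => hup (hh ▸ hxp)
            have hd := h u x (Or.inr hna)
            have h2 : proj u x (u :: a') = u :: proj u x a' := by
              simp [proj, List.filter_cons]
            have hxmem : x ∈ proj u x p := List.mem_filter.2 ⟨hxp, by simp⟩
            have hnenil : proj u x p ≠ [] := by
              intro hnil; rw [hnil] at hxmem; exact List.not_mem_nil hxmem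
            obtain ⟨e, rest, herest⟩ := List.exists_cons_of_ne_nil hnenil
            have hemem : e ∈ proj u x p := by rw [herest]; exact List.mem_cons_self
            have heu : e ≠ u := fun hh => hup (hh ▸ (List.mem_filter.1 hemem).1)
            have h3 : proj u x (p ++ u :: s) = (e :: rest) ++ proj u x (u :: s) := by
              rw [proj_append, herest]
            rw [h2, h3] at hd
            exact heu (List.head_eq_of_cons_eq hd).symm
          have hfront := con_front (G := G) p s hadj
          -- strip the heads of all projections
          have hproj : ∀ c d : V, (c = d ∨ ¬ G.Adj c d) →
              proj c d a' = proj c d (p ++ s) := by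
            intro c d hcd
            have h4 := (h c d hcd).trans (proj_eq_of_con hfront c d hcd)
            by_cases hu : u = c ∨ u = d
            · have e1 : proj c d (u :: a') = u :: proj c d a' := by
                simp [proj, List.filter_cons, hu]
              have e2 : proj c d (u :: (p ++ s)) = u :: proj c d (p ++ s) := by
                simp [proj, List.filter_cons, hu]
              rw [e1] at h4
              have : proj c d ((FreeMonoid.of u * FreeMonoid.ofList (p ++ s)).toList)
                  = u :: proj c d (p ++ s) := e2
              rw [this] at h4
              exact List.tail_eq_of_cons_eq h4
            · have e1 : proj c d (u :: a') = proj c d a' := by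
                simp [proj, List.filter_cons, hu]
              have e2 : proj c d (u :: (p ++ s)) = proj c d (p ++ s) := by
                simp [proj, List.filter_cons, hu]
              rw [e1] at h4
              exact h4.trans e2
          have hlen : a'.length ≤ n := by
            simpa [Nat.succ_le_succ_iff] using ha
          have hcon := ih a' (p ++ s) hlen hproj
          have h5 : traceCon G (FreeMonoid.ofList (u :: a'))
              (FreeMonoid.of u * FreeMonoid.ofList (p ++ s)) := by
            rw [FreeMonoid.ofList_cons]
            exact (traceCon G).mul ((traceCon G).refl _) hcon
          exact (traceCon G).trans h5 ((traceCon G).symm hfront)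

/-- Left cancellation in the trace monoid. -/
theorem tm_cancel_left {a b : TraceMonoid G} (v : V)
    (h : tmOf G v * a = tmOf G v * b) : a = b := by
  induction a using Con.induction_on with
  | H x =>
    induction b using Con.induction_on with
    | H y =>
      have hcon : traceCon G (FreeMonoid.of v * x) (FreeMonoid.of v * y) := by
        refine (traceCon G).eq.1 ?_
        rw [Con.coe_mul, Con.coe_mul]
        exact h
      have hproj : ∀ c d : V, (c = d ∨ ¬ G.Adj c d) →
          proj c d x.toList = proj c d y.toList := by
        intro c d hcd
        have h4 := proj_eq_of_con hcon c d hcd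
        have e : ∀ (l : FreeMonoid V), proj c d ((FreeMonoid.of v * l).toList)
            = (if v = c ∨ v = d then [v] else []) ++ proj c d l.toList := by
          intro l
          by_cases hv : v = c ∨ v = d <;>
            simp [proj, FreeMonoid.toList_of_mul, List.filter_cons, hv]
        rw [e, e] at h4
        exact List.append_cancel_left h4
      exact (traceCon G).eq.2 (con_of_proj x.toList.length x.toList y.toList le_rfl hproj)

end Words

section TM
variable {V : Type*} [DecidableEq V] {G : SimpleGraph V}

theorem count_eq_proj_length (v : V) (l : List V) : (proj v v l).length = l.count v := by
  induction l with
  | nil => rfl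
  | cons a t ih =>
      rw [List.count_cons]
      show (List.filter _ (a :: t)).length = _
      rw [List.filter_cons]
      simp [proj] at ih
      by_cases hav : a = v
      · simp [hav, ih]
      · simp [hav, ih]

/-- The number of occurrences of the letter `v` in an element of the trace monoid. -/
def cnt (v : V) (w : TraceMonoid G) : ℕ :=
  Con.liftOn w (fun l => l.toList.count v) (fun a b h => by
    have hp := proj_eq_of_con h v v (Or.inl rfl)
    have e1 := count_eq_proj_length v a.toList
    have e2 := count_eq_proj_length v b.toList
    rw [← e1, ← e2, hp])

theorem cnt_one (v : V) : cnt v (1 : TraceMonoid G) = 0 := rfl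

theorem cnt_of_mul (v u : V) (w : TraceMonoid G) :
    cnt v (tmOf G u * w) = cnt v w + (if u = v then 1 else 0) := by
  induction w using Con.induction_on with
  | H l =>
      have : tmOf G u * (l : TraceMonoid G) = ((FreeMonoid.of u * l : FreeMonoid V) : TraceMonoid G) := by
        rw [Con.coe_mul]; rfl
      rw [this]
      show (FreeMonoid.of u * l).toList.count v = l.toList.count v + _
      rw [FreeMonoid.toList_of_mul, List.count_cons]
      simp

theorem tlen_one : tlen (G := G) 1 = 0 := rfl

theorem tlen_of_mul (u : V) (w : TraceMonoid G) :
    tlen (tmOf G u * w) = tlen w + 1 := by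
  induction w using Con.induction_on with
  | H l =>
      have : tmOf G u * (l : TraceMonoid G) = ((FreeMonoid.of u * l : FreeMonoid V) : TraceMonoid G) := by
        rw [Con.coe_mul]; rfl
      rw [this]
      show (FreeMonoid.of u * l).length = l.length + 1
      rw [FreeMonoid.length_mul]
      simp [FreeMonoid.length_of]
      omega

end TM

section RankLemmas

theorem card_filter_lt_succ {N : ℕ} (S : Finset (Fin N)) (m : ℕ) :
    (S.filter (fun j => j.val < m + 1)).card =
      (S.filter (fun j => j.val < m)).card + (S.filter (fun j => j.val = m)).card := by
  classical
  have hsplit : S.filter (fun j => j.val < m + 1) =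
      S.filter (fun j => j.val < m) ∪ S.filter (fun j => j.val = m) := by
    ext j
    simp only [Finset.mem_filter, Finset.mem_union]
    constructor
    · rintro ⟨h1, h2⟩
      rcases Nat.lt_succ_iff_lt_or_eq.1 h2 with h3 | h3
      · exact Or.inl ⟨h1, h3⟩
      · exact Or.inr ⟨h1, h3⟩
    · rintro (⟨h1, h2⟩ | ⟨h1, h2⟩)
      · exact ⟨h1, by omega⟩
      · exact ⟨h1, by omega⟩
  rw [hsplit, Finset.card_union_of_disjoint]
  refine Finset.disjoint_left.2 ?_
  intro j h1 h2
  simp only [Finset.mem_filter] at h1 h2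
  omega

theorem rank_lt_of_lt {N : ℕ} (S : Finset (Fin N)) {a : Fin N} (ha : a ∈ S) {m : ℕ}
    (hab : a.val < m) :
    (S.filter (fun t => t.val < a.val)).card < (S.filter (fun t => t.val < m)).card := by
  classical
  apply Finset.card_lt_card
  have hsub : S.filter (fun t => t.val < a.val) ⊆ S.filter (fun t => t.val < m) := by
    intro t ht
    simp only [Finset.mem_filter] at ht ⊢
    exact ⟨ht.1, by omega⟩
  refine (Finset.ssubset_iff_of_subset hsub).2 ⟨a, ?_, ?_⟩
  · simp [Finset.mem_filter, ha, hab]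
  · simp [Finset.mem_filter]

theorem rank_inj {N : ℕ} (S : Finset (Fin N)) {a b : Fin N} (ha : a ∈ S) (hb : b ∈ S)
    (h : (S.filter (fun t => t.val < a.val)).card = (S.filter (fun t => t.val < b.val)).card) :
    a = b := by
  rcases lt_trichotomy a.val b.val with hlt | heq | hlt
  · exact absurd h (Nat.ne_of_lt (rank_lt_of_lt S ha hlt))
  · exact Fin.ext heq
  · exact absurd h.symm (Nat.ne_of_lt (rank_lt_of_lt S hb hlt))

theorem exists_rank {N : ℕ} (S : Finset (Fin N)) (k r : ℕ)
    (hr : r < (S.filter (fun j => j.val < k)).card) :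
    ∃ j ∈ S, j.val < k ∧ (S.filter (fun t => t.val < j.val)).card = r := by
  classical
  set f : ℕ → ℕ := fun m => (S.filter (fun j => j.val < m)).card with hf
  have hex : ∃ m, r < f m := ⟨k, hr⟩
  have hrm : r < f (Nat.find hex) := Nat.find_spec hex
  have hmk : Nat.find hex ≤ k := Nat.find_le hr
  have hm0 : Nat.find hex ≠ 0 := by
    intro h0
    rw [h0] at hrm
    have h1 : f 0 = 0 := by simp [hf]
    omega
  obtain ⟨m', hm'eq⟩ := Nat.exists_eq_succ_of_ne_zero hm0
  have hm' : ¬ r < f m' := Nat.find_min hex (by omega)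
  have hsplit : f (m' + 1) = f m' + (S.filter (fun j => j.val = m')).card :=
    card_filter_lt_succ S m'
  have hfm : r < f (m' + 1) := by have h2 := hrm; rwa [hm'eq] at h2
  have hpos : 0 < (S.filter (fun j => j.val = m')).card := by omega
  obtain ⟨j, hj⟩ := Finset.card_pos.1 hpos
  simp only [Finset.mem_filter] at hj
  refine ⟨j, hj.1, by omega, ?_⟩
  have hone : (S.filter (fun j => j.val = m')).card ≤ 1 := by
    refine Finset.card_le_one.2 ?_
    intro a ha b hb
    simp only [Finset.mem_filter] at ha hb
    exact Fin.ext (ha.2.trans hb.2.symm)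
  have he : (S.filter (fun t => t.val < j.val)).card = f m' := by
    rw [hj.2]
  omega

end RankLemmas

section Paths
variable {L : ℕ} {G : SimpleGraph (Fin L)} {p : ℕ} {ε : ℕ → ℤ} {i : Fin (2 * p) → Fin L}

theorem down_exists (P : LabeledPaths G p ε i) (k : Fin (2 * p)) (hk : ¬ (ε k = 1)) :
    ∃ v, P.val k.castSucc = tmOf G v * P.val k.succ := by
  obtain ⟨v, hv | hv⟩ := P.prop.2.2.1 k
  · exact ⟨v, hv⟩
  · exfalso
    apply hk
    refine (P.prop.2.2.2.1 k).2 ?_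
    rw [hv, tlen_of_mul]
    omega

open Classical in
/-- The letter removed at step `k` (junk value at up steps). -/
noncomputable def dlet (P : LabeledPaths G p ε i) (k : Fin (2 * p)) : Fin L :=
  if h : ∃ v, P.val k.castSucc = tmOf G v * P.val k.succ then h.choose else i k

open Classical in
theorem dlet_spec (P : LabeledPaths G p ε i) (k : Fin (2 * p)) (hk : ¬ (ε k = 1)) :
    P.val k.castSucc = tmOf G (dlet P k) * P.val k.succ := by
  rw [dlet, dif_pos (down_exists P k hk)]
  exact (down_exists P k hk).choose_spec

/-- Up steps with letter `v`. -/
def upSet (ε : ℕ → ℤ) (i : Fin (2 * p) → Fin L) (v : Fin L) : Finset (Fin (2 * p)) :=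
  Finset.univ.filter (fun j => ε j = 1 ∧ i j = v)

/-- Down steps removing letter `v`. -/
noncomputable def dnSet (P : LabeledPaths G p ε i) (v : Fin L) : Finset (Fin (2 * p)) :=
  Finset.univ.filter (fun j => ¬ (ε j = 1) ∧ dlet P j = v)

def Acnt (ε : ℕ → ℤ) (i : Fin (2 * p) → Fin L) (v : Fin L) (m : ℕ) : ℕ :=
  ((upSet ε i v).filter (fun j => j.val < m)).card

noncomputable def Rcnt (P : LabeledPaths G p ε i) (v : Fin L) (m : ℕ) : ℕ :=
  ((dnSet P v).filter (fun j => j.val < m)).card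

theorem count_succ {N : ℕ} (S : Finset (Fin N)) (m : ℕ) (hm : m < N) :
    (S.filter (fun j => j.val < m + 1)).card =
      (S.filter (fun j => j.val < m)).card + (if (⟨m, hm⟩ : Fin N) ∈ S then 1 else 0) := by
  classical
  rw [card_filter_lt_succ]
  congr 1
  by_cases h : (⟨m, hm⟩ : Fin N) ∈ S
  · rw [if_pos h]
    refine Finset.card_eq_one.2 ⟨⟨m, hm⟩, ?_⟩
    ext j
    simp only [Finset.mem_filter, Finset.mem_singleton]
    constructor
    · rintro ⟨hjS, hjv⟩
      exact Fin.ext hjv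
    · rintro rfl
      exact ⟨h, rfl⟩
  · rw [if_neg h]
    refine Finset.card_eq_zero.2 (Finset.filter_eq_empty_iff.2 ?_)
    intro j hjS hjv
    exact h (by rwa [show (⟨m, hm⟩ : Fin N) = j from Fin.ext hjv.symm])

theorem invariant (P : LabeledPaths G p ε i) :
    ∀ m, ∀ hm : m ≤ 2 * p, ∀ v : Fin L,
      cnt v (P.val ⟨m, Nat.lt_succ_of_le hm⟩) + Rcnt P v m = Acnt ε i v m := by
  intro m
  induction m with
  | zero =>
      intro hm v
      rw [show (⟨0, Nat.lt_succ_of_le hm⟩ : Fin (2 * p + 1)) = 0 from Fin.ext (by simp),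
        P.prop.1, cnt_one]
      have hA : Acnt ε i v 0 = 0 :=
        Finset.card_eq_zero.2 (Finset.filter_eq_empty_iff.2 (fun _ _ => by omega))
      have hR : Rcnt P v 0 = 0 :=
        Finset.card_eq_zero.2 (Finset.filter_eq_empty_iff.2 (fun _ _ => by omega))
      rw [hA, hR]
  | succ m ih =>
      intro hm v
      have hmk : m < 2 * p := hm
      have ihm := ih (le_of_lt hmk) v
      set k : Fin (2 * p) := ⟨m, hmk⟩ with hkdef
      have hA : Acnt ε i v (m + 1) = Acnt ε i v m + (if k ∈ upSet ε i v then 1 else 0) :=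
        count_succ (upSet ε i v) m hmk
      have hR : Rcnt P v (m + 1) = Rcnt P v m + (if k ∈ dnSet P v then 1 else 0) :=
        count_succ (dnSet P v) m hmk
      have hidx : (⟨m, Nat.lt_succ_of_le (le_of_lt hmk)⟩ : Fin (2 * p + 1)) = k.castSucc := rfl
      have hidx2 : (⟨m + 1, Nat.lt_succ_of_le hm⟩ : Fin (2 * p + 1)) = k.succ := rfl
      rw [hidx] at ihm
      rw [hidx2, hA, hR]
      by_cases he : ε m = 1
      · have hup : P.val k.succ = tmOf G (i k) * P.val k.castSucc := P.prop.2.2.2.2 k he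
        have hc : cnt v (P.val k.succ) =
            cnt v (P.val k.castSucc) + (if i k = v then 1 else 0) := by
          rw [hup, cnt_of_mul]
        have hmemU : k ∈ upSet ε i v ↔ (i k = v) := by
          simp [upSet, hkdef, he]
        have hmemD : k ∉ dnSet P v := by
          simp [dnSet, hkdef, he]
        rw [hc, if_neg hmemD]
        by_cases hiv : i k = v
        · rw [if_pos (hmemU.2 hiv), if_pos hiv]; omega
        · rw [if_neg (fun hh => hiv (hmemU.1 hh)), if_neg hiv]; omega
      · have hdn := dlet_spec P k he
        have hc : cnt v (P.val k.castSucc) =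
            cnt v (P.val k.succ) + (if dlet P k = v then 1 else 0) := by
          rw [hdn, cnt_of_mul]
        have hmemU : k ∉ upSet ε i v := by
          simp [upSet, hkdef, he]
        have hmemD : k ∈ dnSet P v ↔ (dlet P k = v) := by
          simp [dnSet, hkdef, he]
        rw [if_neg hmemU]
        by_cases hdv : dlet P k = v
        · rw [if_pos (hmemD.2 hdv)]
          rw [if_pos hdv] at hc
          omega
        · rw [if_neg (fun hh => hdv (hmemD.1 hh))]
          rw [if_neg hdv] at hc
          omega

theorem rank_lt {P : LabeledPaths G p ε i} {k : Fin (2 * p)} (hk : ¬ (ε k = 1)) :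
    Rcnt P (dlet P k) k.val < Acnt ε i (dlet P k) k.val := by
  have hinv := invariant P k.val (le_of_lt k.isLt) (dlet P k)
  have hd := dlet_spec P k hk
  have hcnt : cnt (dlet P k) (P.val k.castSucc) = cnt (dlet P k) (P.val k.succ) + 1 := by
    rw [hd, cnt_of_mul, if_pos rfl]
  rw [show (⟨(k : ℕ), Nat.lt_succ_of_le (le_of_lt k.isLt)⟩ : Fin (2 * p + 1)) = k.castSucc
    from rfl, hcnt] at hinv
  omega

theorem sig_exists (P : LabeledPaths G p ε i) (k : Fin (2 * p)) (hk : ¬ (ε k = 1)) :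
    ∃ j, j ∈ upSet ε i (dlet P k) ∧ j.val < k.val ∧
      ((upSet ε i (dlet P k)).filter (fun t => t.val < j.val)).card =
        Rcnt P (dlet P k) k.val := by
  obtain ⟨j, h1, h2, h3⟩ := exists_rank (upSet ε i (dlet P k)) k.val _ (rank_lt hk)
  exact ⟨j, h1, h2, h3⟩

/-- The up step matched to the down step `k`. -/
noncomputable def sig (P : LabeledPaths G p ε i) (k : Fin (2 * p)) (hk : ¬ (ε k = 1)) :
    Fin (2 * p) :=
  (sig_exists P k hk).choose

theorem sig_mem (P : LabeledPaths G p ε i) (k : Fin (2 * p)) (hk : ¬ (ε k = 1)) :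
    sig P k hk ∈ upSet ε i (dlet P k) :=
  (sig_exists P k hk).choose_spec.1

theorem sig_up (P : LabeledPaths G p ε i) (k : Fin (2 * p)) (hk : ¬ (ε k = 1)) :
    ε (sig P k hk) = 1 := by
  have := sig_mem P k hk
  simp only [upSet, Finset.mem_filter, Finset.mem_univ, true_and] at this
  exact this.1

theorem sig_letter (P : LabeledPaths G p ε i) (k : Fin (2 * p)) (hk : ¬ (ε k = 1)) :
    i (sig P k hk) = dlet P k := by
  have := sig_mem P k hk
  simp only [upSet, Finset.mem_filter, Finset.mem_univ, true_and] at this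
  exact this.2

theorem sig_rank (P : LabeledPaths G p ε i) (k : Fin (2 * p)) (hk : ¬ (ε k = 1)) :
    ((upSet ε i (dlet P k)).filter (fun t => t.val < (sig P k hk).val)).card =
      Rcnt P (dlet P k) k.val :=
  (sig_exists P k hk).choose_spec.2.2

theorem sig_inj (P : LabeledPaths G p ε i) {k k' : Fin (2 * p)}
    (hk : ¬ (ε k = 1)) (hk' : ¬ (ε k' = 1)) (h : sig P k hk = sig P k' hk') : k = k' := by
  have hv : dlet P k = dlet P k' := by
    rw [← sig_letter P k hk, h, sig_letter P k' hk']
  have hr : Rcnt P (dlet P k) k.val = Rcnt P (dlet P k) k'.val := by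
    rw [← sig_rank P k hk]
    conv_rhs => rw [hv, ← sig_rank P k' hk']
    rw [h, hv]
  have hk1 : k ∈ dnSet P (dlet P k) := by simp [dnSet, hk]
  have hk2 : k' ∈ dnSet P (dlet P k) := by simp [dnSet, hk', hv.symm]
  exact rank_inj (dnSet P (dlet P k)) hk1 hk2 hr

theorem paths_eq (P Q : LabeledPaths G p ε i)
    (h : ∀ (k : Fin (2 * p)) (hk : ¬ (ε k = 1)), sig P k hk = sig Q k hk) : P = Q := by
  have key : ∀ m, ∀ hm : m ≤ 2 * p,
      P.val ⟨m, Nat.lt_succ_of_le hm⟩ = Q.val ⟨m, Nat.lt_succ_of_le hm⟩ := by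
    intro m
    induction m with
    | zero =>
        intro hm
        rw [show (⟨0, Nat.lt_succ_of_le hm⟩ : Fin (2 * p + 1)) = 0 from Fin.ext (by simp),
          P.prop.1, Q.prop.1]
    | succ m ih =>
        intro hm
        have hmk : m < 2 * p := hm
        have hcast := ih (le_of_lt hmk)
        set k : Fin (2 * p) := ⟨m, hmk⟩ with hkdef
        have hidx : (⟨m, Nat.lt_succ_of_le (le_of_lt hmk)⟩ : Fin (2 * p + 1)) = k.castSucc := rfl
        have hidx2 : (⟨m + 1, Nat.lt_succ_of_le hm⟩ : Fin (2 * p + 1)) = k.succ := rfl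
        rw [hidx] at hcast
        rw [hidx2]
        by_cases he : ε m = 1
        · rw [P.prop.2.2.2.2 k he, Q.prop.2.2.2.2 k he, hcast]
        · have hv : dlet P k = dlet Q k := by
            rw [← sig_letter P k he, h k he, sig_letter Q k he]
          apply tm_cancel_left (dlet P k)
          rw [← dlet_spec P k he, hv, ← dlet_spec Q k he, hcast]
  apply Subtype.ext
  funext x
  have := key x.val (Nat.lt_succ_iff.1 x.isLt)
  exact this

end Paths

/-- The number of closed paths at the empty word in the Cayley graph of the trace monoid
with given Dyck step profile `ε` and prescribed up-step labels `i` is at most `p!`. -/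
theorem card_labeledPaths_le_factorial {L : ℕ} (G : SimpleGraph (Fin L)) (p : ℕ)
    (ε : ℕ → ℤ) (hε : IsDyckPath p ε) (i : Fin (2 * p) → Fin L) :
    Nat.card (LabeledPaths G p ε i) ≤ Nat.factorial p := by
  classical
  obtain ⟨hpm, -, hsum⟩ := hε
  have hF : ∃ F : LabeledPaths G p ε i →
      ({k : Fin (2 * p) // ¬ (ε k = 1)} ↪ {j : Fin (2 * p) // ε j = 1}),
      Function.Injective F := by
    refine ⟨fun P => ⟨fun k => ⟨sig P k.1 k.2, sig_up P k.1 k.2⟩, ?_⟩, ?_⟩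
    · intro a b hab
      exact Subtype.ext (sig_inj P a.2 b.2 (congrArg Subtype.val hab))
    · intro P Q h
      apply paths_eq
      intro k hk
      exact congrArg (fun f => ((f : _ → _) ⟨k, hk⟩).val) h
  obtain ⟨F, hFinj⟩ := hF
  have h1 : Nat.card (LabeledPaths G p ε i) ≤
      Nat.card ({k : Fin (2 * p) // ¬ (ε k = 1)} ↪ {j : Fin (2 * p) // ε j = 1}) :=
    Nat.card_le_card_of_injective F hFinj
  have hU1 : Fintype.card {j : Fin (2 * p) // ε j = 1} =
      (Finset.univ.filter (fun k : Fin (2 * p) => ε k = 1)).card := Fintype.card_subtype _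
  have hD1 : Fintype.card {k : Fin (2 * p) // ¬ (ε k = 1)} =
      (Finset.univ.filter (fun k : Fin (2 * p) => ¬ (ε k = 1))).card := Fintype.card_subtype _
  have hUD : (Finset.univ.filter (fun k : Fin (2 * p) => ε k = 1)).card +
      (Finset.univ.filter (fun k : Fin (2 * p) => ¬ (ε k = 1))).card = 2 * p := by
    rw [Finset.card_filter_add_card_filter_not, Finset.card_univ, Fintype.card_fin]
  have hsum2 : ∑ k : Fin (2 * p), ε k = 0 := by
    rw [Fin.sum_univ_eq_sum_range]; exact hsum
  have hsplit := Finset.sum_filter_add_sum_filter_not Finset.univ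
    (fun k : Fin (2 * p) => ε k = 1) (fun k => ε k)
  have hsU : ∑ k ∈ Finset.univ.filter (fun k : Fin (2 * p) => ε k = 1), ε k =
      ((Finset.univ.filter (fun k : Fin (2 * p) => ε k = 1)).card : ℤ) := by
    rw [Finset.sum_congr rfl (fun x hx => (Finset.mem_filter.1 hx).2)]
    rw [Finset.sum_const]
    simp
  have hsD : ∑ k ∈ Finset.univ.filter (fun k : Fin (2 * p) => ¬ (ε k = 1)), ε k =
      -((Finset.univ.filter (fun k : Fin (2 * p) => ¬ (ε k = 1))).card : ℤ) := by
    have hall : ∀ x ∈ Finset.univ.filter (fun k : Fin (2 * p) => ¬ (ε k = 1)),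
        ε x.val = -1 := by
      intro x hx
      rcases hpm x.val x.isLt with h | h
      · exact absurd h (Finset.mem_filter.1 hx).2
      · exact h
    rw [Finset.sum_congr rfl hall, Finset.sum_const]
    simp
  rw [hsU, hsD, hsum2] at hsplit
  have hUp : Fintype.card {j : Fin (2 * p) // ε j = 1} = p := by rw [hU1]; omega
  have hDp : Fintype.card {k : Fin (2 * p) // ¬ (ε k = 1)} = p := by rw [hD1]; omega
  have hcard : Nat.card ({k : Fin (2 * p) // ¬ (ε k = 1)} ↪ {j : Fin (2 * p) // ε j = 1}) =
      Nat.factorial p := by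
    rw [Nat.card_eq_fintype_card, Fintype.card_embedding_eq, hUp, hDp, Nat.descFactorial_self]
  exact le_trans h1 (le_of_eq hcard)
end

section
/- Let G be a simple graph on [L], let ε be a Dyck path of length 2p with up-step set ε↑, and fix a labelling i : ε↑ → [L]. For v ∈ [L] let c*(v) denote the size of the largest clique of G containing v. Then the number of closed paths e = w₀, ..., w_{2p} = e in the Cayley graph of the trace monoid T(G) with step profile ε and with w_k = i(k)·w_{k-1} for all k ∈ ε↑ is at most the product over k ∈ ε↑ of c*(i(k)). In particular it is at most ω(G)^p, where ω(G) is the clique number of G. -/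
section Proj

variable {V : Type*} [DecidableEq V] {G : SimpleGraph V}

/-- Projection of the free monoid onto the letters `{a, c}`. -/
def fword (a c : V) : FreeMonoid V →* FreeMonoid V :=
  FreeMonoid.lift (fun x => if x = a ∨ x = c then FreeMonoid.of x else 1)

lemma fword_of (a c d : V) :
    fword a c (FreeMonoid.of d) = if d = a ∨ d = c then FreeMonoid.of d else 1 :=
  FreeMonoid.lift_eval_of _ _

lemma fword_congr {a c : V} (h : ¬ G.Adj a c) {r s : FreeMonoid V}
    (hrs : traceCon G r s) : fword a c r = fword a c s := by
  have hle : traceCon G ≤ Con.ker (fword a c) := by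
    apply Con.conGen_le.mpr
    rintro x y ⟨u, v, huv, rfl, rfl⟩
    show fword a c _ = fword a c _
    rw [map_mul, map_mul, fword_of, fword_of]
    by_cases hu : u = a ∨ u = c
    · by_cases hv : v = a ∨ v = c
      · exfalso
        rcases hu with rfl | rfl <;> rcases hv with rfl | rfl
        · exact huv.ne rfl
        · exact h huv
        · exact h huv.symm
        · exact huv.ne rfl
      · simp [hu, hv]
    · simp [hu]
  have := hle hrs
  rwa [Con.ker_rel] at this

lemma fword_eq_one_of_forall {m : FreeMonoid V} (h : ∀ b : V, fword b b m = 1) :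
    m = 1 := by
  induction m using FreeMonoid.recOn with
  | one => rfl
  | of_mul x xs ih =>
    exfalso
    have hx := h x
    rw [map_mul, fword_of] at hx
    simp only [or_self, if_pos rfl] at hx
    have := congrArg FreeMonoid.length hx
    simp [FreeMonoid.length_mul, FreeMonoid.length_of] at this

lemma head_strip {a c d : V} {l m : FreeMonoid V}
    (h : fword a c (FreeMonoid.of d * l) = fword a c (FreeMonoid.of d * m)) :
    fword a c l = fword a c m := by
  rw [map_mul, map_mul, fword_of] at h
  by_cases hd : d = a ∨ d = c
  · rw [if_pos hd] at h; exact mul_left_cancel h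
  · rwa [if_neg hd, one_mul, one_mul] at h

/-- If every projection of `m` onto a pair of dependent letters starts with `d`,
then `d` is a left divisor of `m` in the trace monoid. -/
lemma head_div (m : FreeMonoid V) (d : V)
    (h : ∀ c, ¬ G.Adj d c → ∃ t, fword d c m = FreeMonoid.of d * t) :
    ∃ y : TraceMonoid G, (↑m : TraceMonoid G) = tmOf G d * y := by
  induction m using FreeMonoid.recOn with
  | one =>
    exfalso
    obtain ⟨t, ht⟩ := h d (G.irrefl)
    have := congrArg FreeMonoid.length ht
    simp only [FreeMonoid.length_mul, FreeMonoid.length_of, map_one, FreeMonoid.length_one] at this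
    omega
  | of_mul x xs ih =>
    by_cases hxd : x = d
    · subst hxd
      exact ⟨(↑xs : TraceMonoid G), Con.coe_mul _ _⟩
    · by_cases hadj : G.Adj d x
      · have h' : ∀ c, ¬ G.Adj d c → ∃ t, fword d c xs = FreeMonoid.of d * t := by
          intro c hc
          obtain ⟨t, ht⟩ := h c hc
          rw [map_mul, fword_of] at ht
          have hx : ¬ (x = d ∨ x = c) := by
            rintro (rfl | rfl)
            · exact hxd rfl
            · exact hc hadj
          rw [if_neg hx, one_mul] at ht
          exact ⟨t, ht⟩
        obtain ⟨y, hy⟩ := ih h'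
        refine ⟨tmOf G x * y, ?_⟩
        have hcomm0 : ((FreeMonoid.of x * FreeMonoid.of d : FreeMonoid V) :
            TraceMonoid G) = ↑(FreeMonoid.of d * FreeMonoid.of x) :=
          (Con.eq _).mpr (ConGen.Rel.of _ _ ⟨x, d, hadj.symm, rfl, rfl⟩)
        have hcomm : tmOf G x * tmOf G d = tmOf G d * tmOf G x := by
          rw [Con.coe_mul, Con.coe_mul] at hcomm0; exact hcomm0
        calc ((FreeMonoid.of x * xs : FreeMonoid V) : TraceMonoid G)
            = tmOf G x * (↑xs) := Con.coe_mul _ _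
          _ = tmOf G x * (tmOf G d * y) := by rw [hy]
          _ = (tmOf G x * tmOf G d) * y := (mul_assoc _ _ _).symm
          _ = (tmOf G d * tmOf G x) * y := by rw [hcomm]
          _ = tmOf G d * (tmOf G x * y) := mul_assoc _ _ _
      · exfalso
        obtain ⟨t, ht⟩ := h x hadj
        rw [map_mul, fword_of] at ht
        rw [if_pos (Or.inr rfl)] at ht
        have : x = d := by
          have := congrArg FreeMonoid.toList ht
          rw [FreeMonoid.toList_of_mul, FreeMonoid.toList_of_mul] at this
          exact (List.cons.injEq _ _ _ _ ▸ this).1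
        exact hxd this

/-- Projection lemma: traces with equal projections are equal. -/
lemma proj_inj : ∀ (l m : FreeMonoid V),
    (∀ a c, ¬ G.Adj a c → fword a c l = fword a c m) →
    (↑l : TraceMonoid G) = ↑m := by
  intro l
  induction l using FreeMonoid.recOn with
  | one =>
    intro m h
    have : m = 1 := by
      apply fword_eq_one_of_forall
      intro b
      have := (h b b (G.irrefl)).symm
      simpa [map_one] using this
    rw [this]
  | of_mul d l' ih =>
    intro m h
    have hdiv : ∃ y : TraceMonoid G, (↑m : TraceMonoid G) = tmOf G d * y := by
      apply head_div m d
      intro c hc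
      refine ⟨fword d c l', ?_⟩
      rw [← h d c hc, map_mul, fword_of, if_pos (Or.inl rfl)]
    obtain ⟨y, hy⟩ := hdiv
    obtain ⟨m₁, rfl⟩ := Quotient.exists_rep y
    have hym : (↑m : TraceMonoid G) = ↑(FreeMonoid.of d * m₁) := by
      rw [Con.coe_mul]; exact hy
    have hrel : traceCon G m (FreeMonoid.of d * m₁) := (Con.eq _).mp hym
    have h' : ∀ a c, ¬ G.Adj a c → fword a c l' = fword a c m₁ := by
      intro a c hc
      apply head_strip (d := d)
      exact (h a c hc).trans (fword_congr hc hrel)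
    calc (↑(FreeMonoid.of d * l') : TraceMonoid G)
        = ↑(FreeMonoid.of d) * ↑l' := Con.coe_mul _ _
      _ = ↑(FreeMonoid.of d) * ↑m₁ := by rw [ih m₁ h']
      _ = ↑(FreeMonoid.of d * m₁) := (Con.coe_mul _ _).symm
      _ = ↑m := hym.symm

/-- Left cancellation of a letter in the trace monoid. -/
lemma tm_cancel {v : V} {x y : TraceMonoid G}
    (h : tmOf G v * x = tmOf G v * y) : x = y := by
  induction x using Con.induction_on with
  | _ l =>
  induction y using Con.induction_on with
  | _ m =>
  apply proj_inj
  intro a c hc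
  apply head_strip (d := v)
  have h2 : ((FreeMonoid.of v * l : FreeMonoid V) : TraceMonoid G) =
      ↑(FreeMonoid.of v * m) := by
    rw [Con.coe_mul, Con.coe_mul]; exact h
  exact fword_congr hc ((Con.eq _).mp h2)

/-- The set of left-divisor letters of a trace is a clique. -/
lemma leftdiv_clique {b b' : V} {x : TraceMonoid G}
    (hb : ∃ y, x = tmOf G b * y) (hb' : ∃ y, x = tmOf G b' * y)
    (hne : b ≠ b') : G.Adj b b' := by
  by_contra hadj
  obtain ⟨y, hy⟩ := hb
  obtain ⟨y', hy'⟩ := hb'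
  induction y using Con.induction_on with
  | _ l =>
  induction y' using Con.induction_on with
  | _ m =>
  have h2 : ((FreeMonoid.of b * l : FreeMonoid V) : TraceMonoid G) =
      ↑(FreeMonoid.of b' * m) := by
    rw [Con.coe_mul, Con.coe_mul]
    show tmOf G b * ↑l = tmOf G b' * ↑m
    rw [← hy, ← hy']
  have h3 := fword_congr (a := b) (c := b') hadj ((Con.eq _).mp h2)
  rw [map_mul, map_mul, fword_of, fword_of, if_pos (Or.inl rfl),
    if_pos (Or.inr rfl)] at h3
  have := congrArg FreeMonoid.toList h3
  rw [FreeMonoid.toList_of_mul, FreeMonoid.toList_of_mul] at this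
  exact hne (List.cons.injEq _ _ _ _ ▸ this).1

end Proj
section Statements

/-- The clique number of a graph. -/
noncomputable def cliqueNum {V : Type*} (G : SimpleGraph V) : ℕ :=
  sSup {n | ∃ s : Finset V, G.IsNClique n s}

/-- `c*(v)`: the size of the largest clique of `G` containing `v`. -/
noncomputable def cStar {V : Type*} (G : SimpleGraph V) (v : V) : ℕ :=
  sSup {n | ∃ s : Finset V, G.IsNClique n s ∧ v ∈ s}

end Statements

section Tlen

variable {V : Type*} {G : SimpleGraph V}

lemma tlen_coe (l : FreeMonoid V) : tlen (↑l : TraceMonoid G) = l.length := rfl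

lemma tlen_tmOf_mul (v : V) (x : TraceMonoid G) :
    tlen (tmOf G v * x) = tlen x + 1 := by
  induction x using Con.induction_on with
  | _ l =>
    have : tmOf G v * (↑l : TraceMonoid G) = ↑(FreeMonoid.of v * l) :=
      (Con.coe_mul _ _).symm
    rw [this, tlen_coe, tlen_coe, FreeMonoid.length_mul, FreeMonoid.length_of]
    omega

/-- The multiset of letters of a word. -/
def lettersAux : FreeMonoid V → Multiset V := fun l => (FreeMonoid.toList l : Multiset V)

lemma lettersAux_mul (a b : FreeMonoid V) :
    lettersAux (a * b) = lettersAux a + lettersAux b := by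
  simp [lettersAux, FreeMonoid.toList_mul]

lemma lettersAux_of (v : V) : lettersAux (FreeMonoid.of v) = {v} := by
  simp [lettersAux, FreeMonoid.toList_of]

/-- The multiset of letters of a trace. -/
def letters {G : SimpleGraph V} (w : TraceMonoid G) : Multiset V :=
  Con.liftOn w lettersAux (by
    intro a b h
    induction h with
    | of a b h =>
        obtain ⟨u, v, _, ha, hb⟩ := h
        subst ha; subst hb
        rw [lettersAux_mul, lettersAux_mul, lettersAux_of, lettersAux_of]
        simp [Multiset.singleton_add]
        exact Multiset.cons_swap u v 0
    | refl => rfl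
    | symm _ ih => exact ih.symm
    | trans _ _ ih1 ih2 => exact ih1.trans ih2
    | mul _ _ ih1 ih2 =>
        rw [lettersAux_mul, lettersAux_mul, ih1, ih2])

lemma letters_coe (l : FreeMonoid V) :
    letters (↑l : TraceMonoid G) = lettersAux l := rfl

lemma letters_one : letters (1 : TraceMonoid G) = 0 := rfl

lemma letters_tmOf_mul (v : V) (x : TraceMonoid G) :
    letters (tmOf G v * x) = v ::ₘ letters x := by
  induction x using Con.induction_on with
  | _ l =>
    have : tmOf G v * (↑l : TraceMonoid G) = ↑(FreeMonoid.of v * l) :=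
      (Con.coe_mul _ _).symm
    rw [this, letters_coe, letters_coe, lettersAux_mul, lettersAux_of,
      Multiset.singleton_add]

end Tlen

section Dsets

variable {L : ℕ} {G : SimpleGraph (Fin L)}

/-- The set of letters that are left divisors of `x`. -/
noncomputable def Dset (G : SimpleGraph (Fin L)) (x : TraceMonoid G) : Finset (Fin L) :=
  @Finset.filter _ (fun b => ∃ y, x = tmOf G b * y) (Classical.decPred _) Finset.univ

lemma mem_Dset {b : Fin L} {x : TraceMonoid G} :
    b ∈ Dset G x ↔ ∃ y, x = tmOf G b * y := by
  simp [Dset, Finset.mem_filter]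

/-- The trace obtained by removing the left divisor `b` from `x`. -/
noncomputable def subTrace (G : SimpleGraph (Fin L)) (x : TraceMonoid G) (b : Fin L) :
    TraceMonoid G :=
  @dite _ (∃ y, x = tmOf G b * y) (Classical.dec _) (fun h => h.choose) (fun _ => 1)

lemma subTrace_spec {x : TraceMonoid G} {b : Fin L} (h : b ∈ Dset G x) :
    x = tmOf G b * subTrace G x b := by
  rw [mem_Dset] at h
  unfold subTrace
  rw [dif_pos h]
  exact h.choose_spec

lemma subTrace_eq {x y : TraceMonoid G} {b : Fin L} (h : x = tmOf G b * y) :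
    subTrace G x b = y := by
  have hb : b ∈ Dset G x := mem_Dset.mpr ⟨y, h⟩
  exact tm_cancel ((subTrace_spec hb).symm.trans h)

lemma letters_subTrace {x : TraceMonoid G} {b : Fin L} (h : b ∈ Dset G x) :
    letters x = b ::ₘ letters (subTrace G x b) := by
  conv_lhs => rw [subTrace_spec h]
  rw [letters_tmOf_mul]

lemma bddAbove_cliques (v : Fin L) :
    BddAbove {n | ∃ s : Finset (Fin L), G.IsNClique n s ∧ v ∈ s} := by
  refine ⟨L, fun n hn => ?_⟩
  obtain ⟨s, hs, _⟩ := hn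
  have := hs.card_eq
  have h2 := Finset.card_le_univ s
  simp only [Finset.card_univ, Fintype.card_fin] at h2
  omega

lemma bddAbove_cliques' :
    BddAbove {n | ∃ s : Finset (Fin L), G.IsNClique n s} := by
  refine ⟨L, fun n hn => ?_⟩
  obtain ⟨s, hs⟩ := hn
  have := hs.card_eq
  have h2 := Finset.card_le_univ s
  simp only [Finset.card_univ, Fintype.card_fin] at h2
  omega

lemma one_le_cStar (v : Fin L) : 1 ≤ cStar G v := by
  apply le_csSup (bddAbove_cliques v)
  refine ⟨{v}, ⟨?_, Finset.card_singleton v⟩, Finset.mem_singleton_self v⟩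
  simp [SimpleGraph.isClique_iff, Set.Pairwise]

lemma cStar_le_cliqueNum (v : Fin L) : cStar G v ≤ cliqueNum G := by
  apply csSup_le_csSup bddAbove_cliques'
  · exact ⟨1, {v}, ⟨by simp [SimpleGraph.isClique_iff, Set.Pairwise],
      Finset.card_singleton v⟩, Finset.mem_singleton_self v⟩
  · rintro n ⟨s, hs, _⟩
    exact ⟨s, hs⟩

lemma card_Dset_le_cStar {x : TraceMonoid G} {b : Fin L} (hb : b ∈ Dset G x) :
    (Dset G x).card ≤ cStar G b := by
  apply le_csSup (bddAbove_cliques b)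
  refine ⟨Dset G x, ⟨?_, rfl⟩, hb⟩
  intro a ha a' ha' hne
  exact leftdiv_clique (mem_Dset.mp ha) (mem_Dset.mp ha') hne

end Dsets

section Paths

variable {L : ℕ}

/-- A single step of a Cayley path: `some a` is an up step adding the letter `a`;
`none` is a down step removing some letter. -/
def PStep (G : SimpleGraph (Fin L)) :
    Option (Fin L) → TraceMonoid G → TraceMonoid G → Prop
  | some a, y, z => z = tmOf G a * y
  | none, y, z => ∃ b, y = tmOf G b * z

/-- Paths in the Cayley graph, recorded by a list of steps, from `x` to `1`. -/
def NPaths (G : SimpleGraph (Fin L)) (t : List (Option (Fin L)))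
    (x : TraceMonoid G) : Type _ :=
  {w : Fin (t.length + 1) → TraceMonoid G //
    w 0 = x ∧ w (Fin.last _) = 1 ∧
    ∀ j : Fin t.length, PStep G (t.get j) (w j.castSucc) (w j.succ)}

variable {G : SimpleGraph (Fin L)}

private def fz {n : ℕ} : Fin (n + 1) := ⟨0, Nat.succ_pos n⟩

private lemma fz_castSucc {n : ℕ} : (fz : Fin (n+1)).castSucc = (0 : Fin (n+2)) := by
  ext; simp [fz]

private lemma fz_succ {n : ℕ} : ((0 : Fin (n+1)).succ : Fin (n+2)) = (fz : Fin (n+1)).succ := by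
  ext; simp [fz]

/-- The shift map for an up step. -/
def upMap (a : Fin L) (t : List (Option (Fin L))) (x : TraceMonoid G) :
    NPaths G (some a :: t) x → NPaths G t (tmOf G a * x) := fun ⟨w, h0, hl, hs⟩ =>
  ⟨fun j => w j.succ, by
    have hstep : PStep G (some a) (w (fz (n := t.length)).castSucc)
        (w (fz (n := t.length)).succ) := hs (fz (n := t.length))
    show w ((0 : Fin (t.length + 1)).succ) = tmOf G a * x
    rw [fz_succ, hstep, fz_castSucc, h0], by
    show w (Fin.last t.length).succ = 1
    rw [Fin.succ_last]; exact hl, by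
    intro j
    have hstep := hs j.succ
    have hget : (some a :: t).get j.succ = t.get j := List.get_cons_succ
    rw [hget] at hstep
    show PStep G (t.get j) (w j.castSucc.succ) (w j.succ.succ)
    rwa [Fin.succ_castSucc]⟩

lemma upMap_injective (a : Fin L) (t : List (Option (Fin L))) (x : TraceMonoid G) :
    Function.Injective (upMap a t x) := by
  rintro ⟨w, h0, hl, hs⟩ ⟨w', h0', hl', hs'⟩ h
  have hval := congrArg Subtype.val h
  simp only [upMap] at hval
  apply Subtype.ext
  funext j
  refine Fin.cases ?_ (fun k => ?_) j
  · exact h0.trans h0'.symm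
  · exact congrFun hval k

/-- The shift map for a down step. -/
noncomputable def downMap (t : List (Option (Fin L))) (x : TraceMonoid G) :
    NPaths G (none :: t) x →
      Σ b : {b : Fin L // b ∈ Dset G x}, NPaths G t (subTrace G x b.1) :=
  fun ⟨w, h0, hl, hs⟩ =>
    have hstep : ∃ b, w (fz (n := t.length)).castSucc =
        tmOf G b * w (fz (n := t.length)).succ := hs (fz (n := t.length))
    have hx : x = tmOf G hstep.choose * w (fz (n := t.length)).succ := by
      rw [← h0, ← fz_castSucc]; exact hstep.choose_spec
    ⟨⟨hstep.choose, mem_Dset.mpr ⟨_, hx⟩⟩,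
      ⟨fun j => w j.succ, by
        show w ((0 : Fin (t.length + 1)).succ) = subTrace G x hstep.choose
        rw [fz_succ]
        exact (subTrace_eq hx).symm, by
        show w (Fin.last t.length).succ = 1
        rw [Fin.succ_last]; exact hl, by
        intro j
        have hstep' := hs j.succ
        have hget : (none :: t).get j.succ = t.get j := List.get_cons_succ
        rw [hget] at hstep'
        show PStep G (t.get j) (w j.castSucc.succ) (w j.succ.succ)
        rwa [Fin.succ_castSucc]⟩⟩

/-- Reconstruction map, a left inverse of `downMap` on values. -/
noncomputable def reconMap (t : List (Option (Fin L))) (x : TraceMonoid G) :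
    (Σ b : {b : Fin L // b ∈ Dset G x}, NPaths G t (subTrace G x b.1)) →
      (Fin ((none :: t).length + 1) → TraceMonoid G) :=
  fun q => Fin.cases x (fun j => q.2.val j)

lemma recon_downMap (t : List (Option (Fin L))) (x : TraceMonoid G)
    (u : NPaths G (none :: t) x) : reconMap t x (downMap t x u) = u.val := by
  obtain ⟨w, h0, hl, hs⟩ := u
  funext j
  refine Fin.cases ?_ (fun k => ?_) j
  · exact h0.symm
  · rfl

lemma downMap_injective (t : List (Option (Fin L))) (x : TraceMonoid G) :
    Function.Injective (downMap t x) := by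
  intro u u' h
  apply Subtype.ext
  rw [← recon_downMap t x u, ← recon_downMap t x u', h]

lemma npaths_finite : ∀ (t : List (Option (Fin L))) (x : TraceMonoid G),
    Finite (NPaths G t x) := by
  intro t
  induction t with
  | nil =>
    intro x
    have : Subsingleton (NPaths G [] x) := by
      constructor
      rintro ⟨w, h0, hl, hs⟩ ⟨w', h0', hl', hs'⟩
      apply Subtype.ext
      funext j
      show w j = w' j
      have hj : j = 0 := by
        apply Fin.ext
        have := j.isLt
        simp only [List.length_nil] at this
        simpa using Nat.lt_one_iff.mp this
      rw [hj, h0, h0']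
    exact Finite.of_subsingleton
  | cons s t ih =>
    intro x
    cases s with
    | some a =>
      have := ih (tmOf G a * x)
      exact Finite.of_injective _ (upMap_injective a t x)
    | none =>
      have : ∀ b : {b : Fin L // b ∈ Dset G x}, Finite (NPaths G t (subTrace G x b.1)) :=
        fun b => ih _
      exact Finite.of_injective _ (downMap_injective t x)

noncomputable def pweight (G : SimpleGraph (Fin L)) : Option (Fin L) → ℚ≥0
  | some a => (cStar G a : ℚ≥0)
  | none => 1

lemma main_bound : ∀ (t : List (Option (Fin L))) (x : TraceMonoid G),
    (Nat.card (NPaths G t x) : ℚ≥0) ≤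
      (t.map (pweight G)).prod *
        ((letters x).map (fun b => (cStar G b : ℚ≥0))).prod := by
  intro t
  induction t with
  | nil =>
    intro x
    by_cases hx : x = 1
    · subst hx
      have hcard : Nat.card (NPaths G [] (1 : TraceMonoid G)) ≤ 1 := by
        have : Subsingleton (NPaths G [] (1 : TraceMonoid G)) := by
          constructor
          rintro ⟨w, h0, hl, hs⟩ ⟨w', h0', hl', hs'⟩
          apply Subtype.ext
          funext j
          show w j = w' j
          have hj : j = 0 := by
            apply Fin.ext
            have := j.isLt
            simp only [List.length_nil] at this
            simpa using Nat.lt_one_iff.mp this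
          rw [hj, h0, h0']
        have hinj : Function.Injective
            (fun _ : NPaths G [] (1 : TraceMonoid G) => PUnit.unit.{1}) :=
          fun a b _ => Subsingleton.elim a b
        have := Nat.card_le_card_of_injective _ hinj
        simpa using this
      rw [letters_one]
      simp only [Multiset.map_zero, Multiset.prod_zero, List.map_nil, List.prod_nil, mul_one]
      exact_mod_cast hcard
    · have : IsEmpty (NPaths G [] x) := by
        constructor
        rintro ⟨w, h0, hl, hs⟩
        apply hx
        have h00 : (0 : Fin ((List.nil (α := Option (Fin L))).length + 1)) =
            Fin.last (List.nil (α := Option (Fin L))).length := rfl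
        rw [← h0, h00, hl]
      rw [Nat.card_of_isEmpty]
      simp
  | cons s t ih =>
    intro x
    cases s with
    | some a =>
      haveI := npaths_finite (G := G) t (tmOf G a * x)
      have h1 : Nat.card (NPaths G (some a :: t) x) ≤
          Nat.card (NPaths G t (tmOf G a * x)) :=
        Nat.card_le_card_of_injective _ (upMap_injective a t x)
      have h2 := ih (tmOf G a * x)
      rw [letters_tmOf_mul, Multiset.map_cons, Multiset.prod_cons] at h2
      calc (Nat.card (NPaths G (some a :: t) x) : ℚ≥0)
          ≤ (Nat.card (NPaths G t (tmOf G a * x)) : ℚ≥0) := by exact_mod_cast h1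
        _ ≤ (t.map (pweight G)).prod *
            ((cStar G a : ℚ≥0) * ((letters x).map (fun b => (cStar G b : ℚ≥0))).prod) := h2
        _ = ((some a :: t).map (pweight G)).prod *
            ((letters x).map (fun b => (cStar G b : ℚ≥0))).prod := by
            rw [List.map_cons, List.prod_cons]
            show _ = (cStar G a : ℚ≥0) * _ * _
            ring
    | none =>
      haveI : ∀ b : {b : Fin L // b ∈ Dset G x}, Finite (NPaths G t (subTrace G x b.1)) :=
        fun b => npaths_finite t _
      haveI : Finite ((b : {b : Fin L // b ∈ Dset G x}) × NPaths G t (subTrace G x b.1)) :=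
        inferInstance
      -- card bound through the sigma type
      have h1 : Nat.card (NPaths G (none :: t) x) ≤
          ∑ b ∈ Dset G x, Nat.card (NPaths G t (subTrace G x b)) := by
        have hinj := Nat.card_le_card_of_injective _ (downMap_injective t x)
        refine hinj.trans ?_
        haveI : ∀ b : {b : Fin L // b ∈ Dset G x},
            Fintype (NPaths G t (subTrace G x b.1)) := fun b => Fintype.ofFinite _
        rw [Nat.card_eq_fintype_card, Fintype.card_sigma]
        rw [← Finset.sum_coe_sort (Dset G x) (fun b => Nat.card (NPaths G t (subTrace G x b)))]
        apply le_of_eq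
        exact Finset.sum_congr rfl (fun b _ => by rw [Nat.card_eq_fintype_card])
      -- the letters product
      set P := ((letters x).map (fun b => (cStar G b : ℚ≥0))).prod with hP
      set W := (t.map (pweight G)).prod with hW
      have hterm : ∀ b ∈ Dset G x,
          (Nat.card (NPaths G t (subTrace G x b)) : ℚ≥0) ≤ W * (P * (1 / (cStar G b : ℚ≥0))) := by
        intro b hb
        have h2 := ih (subTrace G x b)
        have hPb : P = (cStar G b : ℚ≥0) *
            ((letters (subTrace G x b)).map (fun c => (cStar G c : ℚ≥0))).prod := by
          rw [hP, letters_subTrace hb, Multiset.map_cons, Multiset.prod_cons]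
        have hc0 : (cStar G b : ℚ≥0) ≠ 0 := by
          have := one_le_cStar (G := G) b
          positivity
        have hPb' : P * (1 / (cStar G b : ℚ≥0)) =
            ((letters (subTrace G x b)).map (fun c => (cStar G c : ℚ≥0))).prod := by
          rw [hPb]
          field_simp
        rw [← hPb'] at h2
        exact h2
      have hsum : ∑ b ∈ Dset G x, (1 / (cStar G b : ℚ≥0)) ≤ 1 := by
        by_cases hD : (Dset G x).Nonempty
        · have hcardpos : (0 : ℚ≥0) < (Dset G x).card := by
            have := Finset.card_pos.mpr hD
            exact_mod_cast this
          have hle : ∀ b ∈ Dset G x,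
              (1 / (cStar G b : ℚ≥0)) ≤ 1 / ((Dset G x).card : ℚ≥0) := by
            intro b hb
            apply one_div_le_one_div_of_le hcardpos
            exact_mod_cast card_Dset_le_cStar hb
          calc ∑ b ∈ Dset G x, (1 / (cStar G b : ℚ≥0))
              ≤ ∑ _b ∈ Dset G x, (1 / ((Dset G x).card : ℚ≥0)) := Finset.sum_le_sum hle
            _ = ((Dset G x).card : ℚ≥0) * (1 / ((Dset G x).card : ℚ≥0)) := by
                rw [Finset.sum_const, nsmul_eq_mul]
            _ = 1 := by
                rw [mul_one_div, div_self (ne_of_gt hcardpos)]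
        · rw [Finset.not_nonempty_iff_eq_empty] at hD
          rw [hD]
          simp
      calc (Nat.card (NPaths G (none :: t) x) : ℚ≥0)
          ≤ (↑(∑ b ∈ Dset G x, Nat.card (NPaths G t (subTrace G x b))) : ℚ≥0) := by
            exact_mod_cast h1
        _ = ∑ b ∈ Dset G x, (Nat.card (NPaths G t (subTrace G x b)) : ℚ≥0) := by
            push_cast; ring
        _ ≤ ∑ b ∈ Dset G x, W * (P * (1 / (cStar G b : ℚ≥0))) := Finset.sum_le_sum hterm
        _ = W * P * ∑ b ∈ Dset G x, (1 / (cStar G b : ℚ≥0)) := by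
            rw [Finset.mul_sum]
            apply Finset.sum_congr rfl
            intro b _
            ring
        _ ≤ W * P * 1 := by
            apply mul_le_mul_of_nonneg_left hsum
            positivity
        _ = ((none :: t).map (pweight G)).prod * P := by
            rw [List.map_cons, List.prod_cons]
            show W * P * 1 = pweight G none * W * P
            simp [pweight]

end Paths
section Final

variable {L : ℕ} {G : SimpleGraph (Fin L)}

/-- The list of steps prescribed by a profile `ε` and labels `i`. -/
def stepList (p : ℕ) (ε : ℕ → ℤ) (i : Fin (2 * p) → Fin L) : List (Option (Fin L)) :=
  List.ofFn (fun k : Fin (2 * p) => if ε k.val = 1 then some (i k) else none)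

lemma stepList_length (p : ℕ) (ε : ℕ → ℤ) (i : Fin (2 * p) → Fin L) :
    (stepList p ε i).length = 2 * p := List.length_ofFn

/-- Conversion of a labeled path into an `NPaths` element. -/
def toNP (G : SimpleGraph (Fin L)) (p : ℕ) (ε : ℕ → ℤ) (i : Fin (2 * p) → Fin L)
    (hε1 : ∀ k < 2 * p, ε k = 1 ∨ ε k = -1) (u : LabeledPaths G p ε i) :
    NPaths G (stepList p ε i) 1 :=
  ⟨fun j => u.1 (Fin.cast (by rw [stepList_length]) j), by
    obtain ⟨h0, hl, hadj, hiff, hup⟩ := u.2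
    have hlen : (stepList p ε i).length = 2 * p := stepList_length p ε i
    have hlen1 : (stepList p ε i).length + 1 = 2 * p + 1 := by rw [hlen]
    refine ⟨?_, ?_, ?_⟩
    · have hz : Fin.cast hlen1 (0 : Fin ((stepList p ε i).length + 1)) =
          (0 : Fin (2 * p + 1)) := by
        apply Fin.ext; simp
      show u.1 (Fin.cast hlen1 0) = 1
      rw [hz, h0]
    · have hlast : Fin.cast hlen1 (Fin.last (stepList p ε i).length) =
          Fin.last (2 * p) := by
        apply Fin.ext; simp [hlen]
      show u.1 (Fin.cast hlen1 (Fin.last (stepList p ε i).length)) = 1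
      rw [hlast, hl]
    · intro j
      set k : Fin (2 * p) := Fin.cast hlen j with hk
      have hget : (stepList p ε i).get j =
          if ε (k : ℕ) = 1 then some (i k) else none := by
        rw [List.get_eq_getElem]
        simp [stepList, hk]
        rfl
      show PStep G ((stepList p ε i).get j) (u.1 (Fin.cast hlen1 j.castSucc))
        (u.1 (Fin.cast hlen1 j.succ))
      have hcs : Fin.cast hlen1 j.castSucc = k.castSucc := by
        apply Fin.ext; simp [hk]
      have hsc : Fin.cast hlen1 j.succ = k.succ := by
        apply Fin.ext; simp [hk]
      rw [hget, hcs, hsc]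
      by_cases h1 : ε (k : ℕ) = 1
      · rw [if_pos h1]
        exact hup k h1
      · rw [if_neg h1]
        obtain ⟨v, hv | hv⟩ := hadj k
        · exact ⟨v, hv⟩
        · exfalso
          apply h1
          apply (hiff k).mpr
          rw [hv, tlen_tmOf_mul]
          omega⟩

lemma toNP_injective (G : SimpleGraph (Fin L)) (p : ℕ) (ε : ℕ → ℤ)
    (i : Fin (2 * p) → Fin L) (hε1 : ∀ k < 2 * p, ε k = 1 ∨ ε k = -1) :
    Function.Injective (toNP G p ε i hε1) := by
  have hlen1 : (stepList p ε i).length + 1 = 2 * p + 1 := by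
    rw [stepList_length]
  intro u u' h
  have hval := congrArg Subtype.val h
  simp only [toNP] at hval
  apply Subtype.ext
  funext m
  have h1 := congrFun hval (Fin.cast hlen1.symm m)
  have hmm : Fin.cast hlen1 (Fin.cast hlen1.symm m) = m := by apply Fin.ext; simp
  have h2 : u.1 (Fin.cast hlen1 (Fin.cast hlen1.symm m)) =
      u'.1 (Fin.cast hlen1 (Fin.cast hlen1.symm m)) := h1
  rwa [hmm] at h2

lemma filter_card_eq (p : ℕ) (ε : ℕ → ℤ) (hε : IsDyckPath p ε) :
    (Finset.univ.filter (fun k : Fin (2 * p) => ε k = 1)).card = p := by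
  obtain ⟨hε1, _, hε3⟩ := hε
  classical
  have hsum : ∑ k ∈ Finset.range (2 * p), (if ε k = 1 then (1 : ℤ) else 0) =
      (((Finset.range (2 * p)).filter (fun k => ε k = 1)).card : ℤ) := by
    rw [← Finset.sum_filter]
    simp
  have hkey : ∑ k ∈ Finset.range (2 * p), (if ε k = 1 then (1 : ℤ) else 0) * 2 =
      ∑ k ∈ Finset.range (2 * p), (ε k + 1) := by
    apply Finset.sum_congr rfl
    intro k hk
    rcases hε1 k (Finset.mem_range.mp hk) with h | h <;> simp [h]
  rw [← Finset.sum_mul, hsum] at hkey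
  have hsum2 : ∑ k ∈ Finset.range (2 * p), (ε k + 1) = 2 * p := by
    rw [Finset.sum_add_distrib, hε3]
    simp
  rw [hsum2] at hkey
  have hcardA : (((Finset.range (2 * p)).filter (fun k => ε k = 1)).card) = p := by
    omega
  suffices hcards : (Finset.univ.filter (fun k : Fin (2 * p) => ε k = 1)).card =
      ((Finset.range (2 * p)).filter (fun k => ε k = 1)).card by
    rw [hcards, hcardA]
  refine Finset.card_bij' (fun (k : Fin (2 * p)) _ => (k : ℕ))
    (fun a ha => (⟨a, Finset.mem_range.mp (Finset.mem_filter.mp ha).1⟩ : Fin (2 * p)))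
    (fun a ha => ?_) (fun a ha => ?_) (fun a ha => rfl) (fun a ha => rfl)
  · rw [Finset.mem_filter]
    exact ⟨Finset.mem_range.mpr a.isLt, (Finset.mem_filter.mp ha).2⟩
  · rw [Finset.mem_filter]
    exact ⟨Finset.mem_univ _, (Finset.mem_filter.mp ha).2⟩

/-- The number of closed paths at the empty word with Dyck step profile `ε` and
prescribed up-step labels `i` is at most `∏_{k ∈ ε↑} c*(i k)`; in particular it is at
most `ω(G)^p`. -/
theorem card_labeledPaths_le_prod_cStar {L : ℕ} (G : SimpleGraph (Fin L)) (p : ℕ)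
    (ε : ℕ → ℤ) (hε : IsDyckPath p ε) (i : Fin (2 * p) → Fin L) :
    Nat.card (LabeledPaths G p ε i) ≤
      ∏ k ∈ Finset.univ.filter (fun k : Fin (2 * p) => ε k = 1), cStar G (i k) ∧
    Nat.card (LabeledPaths G p ε i) ≤ cliqueNum G ^ p := by
  have hε1 := hε.1
  haveI : Finite (NPaths G (stepList p ε i) 1) := npaths_finite _ _
  have hcard : Nat.card (LabeledPaths G p ε i) ≤ Nat.card (NPaths G (stepList p ε i) 1) :=
    Nat.card_le_card_of_injective _ (toNP_injective G p ε i hε1)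
  have hb := main_bound (G := G) (stepList p ε i) 1
  rw [letters_one] at hb
  simp only [Multiset.map_zero, Multiset.prod_zero, mul_one] at hb
  have hprod : ((stepList p ε i).map (pweight G)).prod =
      ∏ k ∈ Finset.univ.filter (fun k : Fin (2 * p) => ε k = 1), (cStar G (i k) : ℚ≥0) := by
    rw [stepList, List.map_ofFn, List.prod_ofFn, Finset.prod_filter]
    apply Finset.prod_congr rfl
    intro k _
    by_cases h1 : ε (k : ℕ) = 1 <;> simp [pweight, h1]
  have hmain : Nat.card (LabeledPaths G p ε i) ≤
      ∏ k ∈ Finset.univ.filter (fun k : Fin (2 * p) => ε k = 1), cStar G (i k) := by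
    have hq : (Nat.card (LabeledPaths G p ε i) : ℚ≥0) ≤
        ((∏ k ∈ Finset.univ.filter (fun k : Fin (2 * p) => ε k = 1),
          cStar G (i k) : ℕ) : ℚ≥0) := by
      calc (Nat.card (LabeledPaths G p ε i) : ℚ≥0)
          ≤ (Nat.card (NPaths G (stepList p ε i) 1) : ℚ≥0) := by exact_mod_cast hcard
        _ ≤ ((stepList p ε i).map (pweight G)).prod := hb
        _ = ∏ k ∈ Finset.univ.filter (fun k : Fin (2 * p) => ε k = 1),
            (cStar G (i k) : ℚ≥0) := hprod
        _ = _ := by push_cast; rfl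
    exact_mod_cast hq
  refine ⟨hmain, hmain.trans ?_⟩
  calc ∏ k ∈ Finset.univ.filter (fun k : Fin (2 * p) => ε k = 1), cStar G (i k)
      ≤ ∏ _k ∈ Finset.univ.filter (fun k : Fin (2 * p) => ε k = 1), cliqueNum G :=
        Finset.prod_le_prod' (fun k _ => cStar_le_cliqueNum (i k))
    _ = cliqueNum G ^ p := by
        rw [Finset.prod_const, filter_card_eq p ε hε]

end Final
end
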